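/- arXiv:1705.03584 — 5 statements merged into one kernel-verified Lean document; each statement's English description precedes it below -/
import Mathlib

section
/- Let z₀, z₁, …, z_n be i.i.d. random variables uniformly distributed on [0,1], and set Z_n = (1/n³)·∑_{k=1}^n k·z_k·∑_{j=0}^{k−1} z_j. Then E[Z_n] = (n+1)(2n+1)/(24n²), so lim_{n→∞} E[Z_n] = 1/12; moreover lim_{n→∞} E[Z_n²] = 1/144, hence lim_{n→∞} Var(Z_n) = 0 and Z_n → 1/12 in L². -/
open MeasureTheory ProbabilityTheory Filter

section AuxSums
open Finset

/-- value of the inner double sum of fourth-moment terms -/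
noncomputable def svq (k l : ℕ) : ℝ :=
  if k = l then ((k:ℝ)^2/12 + (k:ℝ)/36) else ((k:ℝ)*(l:ℝ)/16 + ((min k l : ℕ):ℝ)/24)

lemma sumsq (n : ℕ) : ∑ k ∈ Finset.Icc 1 n, ((k:ℝ))^2 = n*(n+1)*(2*n+1)/6 := by
  induction n with
  | zero => simp
  | succ m ih =>
    rw [Finset.sum_Icc_succ_top (by omega)]
    rw [ih]; push_cast; ring

lemma slem (k l : ℕ) :
    ∑ i ∈ Finset.range k, ∑ j ∈ Finset.range l,
      (if k = l then (if i = j then (1:ℝ)/9 else 1/12)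
       else if i = j ∨ j = k ∨ i = l then (1:ℝ)/12 else 1/16) = svq k l := by
  by_cases hkl : k = l
  · subst hkl
    simp only [svq, eq_self_iff_true, if_true]
    have h1 : ∀ i ∈ Finset.range k, (∑ j ∈ Finset.range k,
        (if i = j then (1:ℝ)/9 else 1/12)) = (k:ℝ)/12 + 1/36 := by
      intro i hi
      have : ∀ j, (if i = j then (1:ℝ)/9 else 1/12)
          = (if i = j then (1:ℝ)/36 else 0) + 1/12 := by
        intro j; split_ifs <;> norm_num
      simp only [this, Finset.sum_add_distrib, Finset.sum_ite_eq, hi, if_pos,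
        Finset.sum_const, Finset.card_range, nsmul_eq_mul]
      ring
    rw [Finset.sum_congr rfl h1, Finset.sum_const, Finset.card_range, nsmul_eq_mul]
    ring
  · simp only [svq, if_neg hkl]
    have key : ∀ i ∈ Finset.range k, ∀ j ∈ Finset.range l,
        (if i = j ∨ j = k ∨ i = l then (1:ℝ)/12 else 1/16)
        = 1/16 + ((if i = j then (1:ℝ)/48 else 0) + (if j = k then (1:ℝ)/48 else 0)
            + (if i = l then (1:ℝ)/48 else 0)) := by
      intro i hi j hj
      simp only [Finset.mem_range] at hi hj
      split_ifs with h h1 h2 h3 h1 h2 h3 h2 h3 h3 <;> ((try norm_num) <;> omega)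
    rw [Finset.sum_congr rfl (fun i hi => Finset.sum_congr rfl (key i hi))]
    simp only [Finset.sum_add_distrib, Finset.sum_const, Finset.card_range, nsmul_eq_mul]
    have e1 : ∑ i ∈ Finset.range k, ∑ j ∈ Finset.range l,
        (if i = j then (1:ℝ)/48 else 0) = ((min k l : ℕ):ℝ)/48 := by
      have h2 : ∀ i ∈ Finset.range k, (∑ j ∈ Finset.range l, (if i = j then (1:ℝ)/48 else 0))
          = (if i ∈ Finset.range l then (1:ℝ)/48 else 0) := by
        intro i _; rw [Finset.sum_ite_eq]
      rw [Finset.sum_congr rfl h2, Finset.sum_ite_mem]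
      have : Finset.range k ∩ Finset.range l = Finset.range (min k l) := by
        ext a; simp [Nat.lt_min]
      rw [this, Finset.sum_const, Finset.card_range, nsmul_eq_mul]; ring
    rw [e1, Finset.sum_ite_eq', ← Finset.mul_sum, Finset.sum_ite_eq']
    rcases lt_or_gt_of_ne hkl with h | h
    · rw [if_pos (Finset.mem_range.2 h), if_neg (by simp only [Finset.mem_range]; omega)]
      have hm : min k l = k := min_eq_left h.le
      rw [hm]; push_cast; ring
    · rw [if_neg (by simp only [Finset.mem_range]; omega), if_pos (Finset.mem_range.2 h)]
      have hm : min k l = l := min_eq_right h.le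
      rw [hm]; push_cast; ring

lemma bigsum (n : ℕ) :
    ∑ k ∈ Finset.Icc 1 n, ∑ l ∈ Finset.Icc 1 n, (k:ℝ)*(l:ℝ)*svq k l
    = (20*(n:ℝ)^6+88*(n:ℝ)^5+125*(n:ℝ)^4+70*(n:ℝ)^3+15*(n:ℝ)^2+2*(n:ℝ))/2880 := by
  induction n with
  | zero => simp
  | succ m ih =>
    have hsv1 : ∀ k, k ∈ Finset.Icc 1 m → svq k (m+1) = (k:ℝ)*((m:ℝ)+1)/16 + (k:ℝ)/24 := by
      intro k hk
      simp only [Finset.mem_Icc] at hk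
      have h1 : k ≠ m+1 := by omega
      have h2 : min k (m+1) = k := by omega
      rw [svq, if_neg h1, h2]; push_cast; ring
    have hsv2 : ∀ l, l ∈ Finset.Icc 1 m → svq (m+1) l = ((m:ℝ)+1)*(l:ℝ)/16 + (l:ℝ)/24 := by
      intro l hl
      simp only [Finset.mem_Icc] at hl
      have h1 : m+1 ≠ l := by omega
      have h2 : min (m+1) l = l := by omega
      rw [svq, if_neg h1, h2]; push_cast; ring
    have hsvd : svq (m+1) (m+1) = ((m:ℝ)+1)^2/12 + ((m:ℝ)+1)/36 := by
      rw [svq, if_pos rfl]; push_cast; ring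
    rw [Finset.sum_Icc_succ_top (by omega : 1 ≤ m+1)]
    have hin : ∀ k, k ∈ Finset.Icc 1 m →
        ∑ l ∈ Finset.Icc 1 (m+1), (k:ℝ)*(l:ℝ)*svq k l
        = (∑ l ∈ Finset.Icc 1 m, (k:ℝ)*(l:ℝ)*svq k l)
          + ((k:ℝ)^2) * (((m:ℝ)+1)^2/16 + ((m:ℝ)+1)/24) := by
      intro k hk
      rw [Finset.sum_Icc_succ_top (by omega : 1 ≤ m+1), hsv1 k hk]
      push_cast; ring
    rw [Finset.sum_congr rfl hin, Finset.sum_add_distrib]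
    have htop : ∑ l ∈ Finset.Icc 1 (m+1), ((m+1:ℕ):ℝ)*(l:ℝ)*svq (m+1) l
        = (∑ l ∈ Finset.Icc 1 m, ((l:ℝ)^2) * (((m:ℝ)+1)^2/16 + ((m:ℝ)+1)/24))
          + ((m:ℝ)+1)*((m:ℝ)+1)*(((m:ℝ)+1)^2/12 + ((m:ℝ)+1)/36) := by
      rw [Finset.sum_Icc_succ_top (by omega : 1 ≤ m+1), hsvd]
      have : ∀ l, l ∈ Finset.Icc 1 m → ((m+1:ℕ):ℝ)*(l:ℝ)*svq (m+1) l
          = ((l:ℝ)^2) * (((m:ℝ)+1)^2/16 + ((m:ℝ)+1)/24) := by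
        intro l hl; rw [hsv2 l hl]; push_cast; ring
      rw [Finset.sum_congr rfl this]; push_cast; ring
    rw [htop, ih]
    have h1 : ∑ k ∈ Finset.Icc 1 m, ((k:ℝ)^2) * (((m:ℝ)+1)^2/16 + ((m:ℝ)+1)/24)
        = ((m:ℝ)*(m+1)*(2*m+1)/6) * (((m:ℝ)+1)^2/16 + ((m:ℝ)+1)/24) := by
      rw [← Finset.sum_mul, sumsq]
    rw [h1]
    push_cast; ring

end AuxSums

section AuxProb

variable {Ω : Type*} [MeasureSpace Ω] [IsProbabilityMeasure (ℙ : Measure Ω)]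
  {z : ℕ → Ω → ℝ}

lemma moment (hmeas : ∀ k, Measurable (z k))
    (hunif : ∀ k, Measure.map (z k) ℙ = volume.restrict (Set.Icc (0 : ℝ) 1))
    (k m : ℕ) : ∫ ω, (z k ω)^m ∂ℙ = 1/((m:ℝ)+1) := by
  have h1 : ∫ ω, (z k ω)^m ∂ℙ = ∫ x, x^m ∂(Measure.map (z k) ℙ) :=
    (integral_map (hmeas k).aemeasurable
      ((measurable_id.pow_const m).aestronglyMeasurable)).symm
  rw [h1, hunif k, MeasureTheory.integral_Icc_eq_integral_Ioc,
    ← intervalIntegral.integral_of_le zero_le_one, integral_pow]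
  simp

lemma momE1 (hmeas : ∀ k, Measurable (z k))
    (hunif : ∀ k, Measure.map (z k) ℙ = volume.restrict (Set.Icc (0 : ℝ) 1))
    (k : ℕ) : ∫ ω, z k ω ∂ℙ = 1/2 := by
  have := moment hmeas hunif k 1
  simp only [pow_one] at this
  rw [this]; norm_num

lemma momE2sq (hmeas : ∀ k, Measurable (z k))
    (hunif : ∀ k, Measure.map (z k) ℙ = volume.restrict (Set.Icc (0 : ℝ) 1))
    (k : ℕ) : ∫ ω, z k ω * z k ω ∂ℙ = 1/3 := by
  have h : (fun ω => z k ω * z k ω) = fun ω => (z k ω)^2 := by funext ω; ring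
  rw [h, moment hmeas hunif k 2]; norm_num

lemma E2 (hmeas : ∀ k, Measurable (z k))
    (hindep : iIndepFun z ℙ)
    (hunif : ∀ k, Measure.map (z k) ℙ = volume.restrict (Set.Icc (0 : ℝ) 1))
    {a b : ℕ} (hab : a ≠ b) : ∫ ω, z a ω * z b ω ∂ℙ = 1/4 := by
  have h : ∫ ω, z a ω * z b ω ∂ℙ = (∫ ω, z a ω ∂ℙ) * ∫ ω, z b ω ∂ℙ :=
    (hindep.indepFun hab).integral_fun_mul_eq_mul_integral
      (hmeas a).aestronglyMeasurable (hmeas b).aestronglyMeasurable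
  rw [h, momE1 hmeas hunif, momE1 hmeas hunif]; norm_num

lemma E22 (hmeas : ∀ k, Measurable (z k))
    (hindep : iIndepFun z ℙ)
    (hunif : ∀ k, Measure.map (z k) ℙ = volume.restrict (Set.Icc (0 : ℝ) 1))
    {a b : ℕ} (hab : a ≠ b) :
    ∫ ω, (z a ω * z a ω) * (z b ω * z b ω) ∂ℙ = 1/9 := by
  have hi : IndepFun (fun ω => z a ω * z a ω) (fun ω => z b ω * z b ω) ℙ := by
    exact (hindep.indepFun hab).comp (measurable_id.mul measurable_id)
      (measurable_id.mul measurable_id)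
  have h : ∫ ω, (z a ω * z a ω) * (z b ω * z b ω) ∂ℙ
      = (∫ ω, z a ω * z a ω ∂ℙ) * ∫ ω, z b ω * z b ω ∂ℙ := hi.integral_fun_mul_eq_mul_integral
    ((hmeas a).mul (hmeas a)).aestronglyMeasurable
    ((hmeas b).mul (hmeas b)).aestronglyMeasurable
  rw [h, momE2sq hmeas hunif, momE2sq hmeas hunif]; norm_num

lemma E211 (hmeas : ∀ k, Measurable (z k))
    (hindep : iIndepFun z ℙ)
    (hunif : ∀ k, Measure.map (z k) ℙ = volume.restrict (Set.Icc (0 : ℝ) 1))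
    {a b c : ℕ} (hab : a ≠ b) (hac : a ≠ c) (hbc : b ≠ c) :
    ∫ ω, (z a ω * z a ω) * (z b ω * z c ω) ∂ℙ = 1/12 := by
  have hp : IndepFun (fun ω => (z a ω, z a ω)) (fun ω => (z b ω, z c ω)) ℙ :=
    hindep.indepFun_prodMk_prodMk hmeas a a b c hab hac hab hac
  have hi : IndepFun (fun ω => z a ω * z a ω) (fun ω => z b ω * z c ω) ℙ :=
    hp.comp (measurable_fst.mul measurable_snd) (measurable_fst.mul measurable_snd)
  have h : ∫ ω, (z a ω * z a ω) * (z b ω * z c ω) ∂ℙ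
      = (∫ ω, z a ω * z a ω ∂ℙ) * ∫ ω, z b ω * z c ω ∂ℙ := hi.integral_fun_mul_eq_mul_integral
    ((hmeas a).mul (hmeas a)).aestronglyMeasurable
    ((hmeas b).mul (hmeas c)).aestronglyMeasurable
  rw [h, momE2sq hmeas hunif, E2 hmeas hindep hunif hbc]; norm_num

lemma E1111 (hmeas : ∀ k, Measurable (z k))
    (hindep : iIndepFun z ℙ)
    (hunif : ∀ k, Measure.map (z k) ℙ = volume.restrict (Set.Icc (0 : ℝ) 1))
    {a b c d : ℕ} (hab : a ≠ b) (hac : a ≠ c) (had : a ≠ d)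
    (hbc : b ≠ c) (hbd : b ≠ d) (hcd : c ≠ d) :
    ∫ ω, (z a ω * z b ω) * (z c ω * z d ω) ∂ℙ = 1/16 := by
  have hp : IndepFun (fun ω => (z a ω, z b ω)) (fun ω => (z c ω, z d ω)) ℙ :=
    hindep.indepFun_prodMk_prodMk hmeas a b c d hac had hbc hbd
  have hi : IndepFun (fun ω => z a ω * z b ω) (fun ω => z c ω * z d ω) ℙ :=
    hp.comp (measurable_fst.mul measurable_snd) (measurable_fst.mul measurable_snd)
  have h : ∫ ω, (z a ω * z b ω) * (z c ω * z d ω) ∂ℙ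
      = (∫ ω, z a ω * z b ω ∂ℙ) * ∫ ω, z c ω * z d ω ∂ℙ := hi.integral_fun_mul_eq_mul_integral
    ((hmeas a).mul (hmeas b)).aestronglyMeasurable
    ((hmeas c).mul (hmeas d)).aestronglyMeasurable
  rw [h, E2 hmeas hindep hunif hab, E2 hmeas hindep hunif hcd]; norm_num

lemma quad (hmeas : ∀ k, Measurable (z k))
    (hindep : iIndepFun z ℙ)
    (hunif : ∀ k, Measure.map (z k) ℙ = volume.restrict (Set.Icc (0 : ℝ) 1))
    {k l i j : ℕ} (hik : i < k) (hjl : j < l) :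
    ∫ ω, z k ω * z i ω * (z l ω * z j ω) ∂ℙ
    = if k = l then (if i = j then (1:ℝ)/9 else 1/12)
      else if i = j ∨ j = k ∨ i = l then (1:ℝ)/12 else 1/16 := by
  by_cases hkl : k = l
  · subst hkl
    rw [if_pos rfl]
    by_cases hij : i = j
    · subst hij
      rw [if_pos rfl,
        show (fun ω => z k ω * z i ω * (z k ω * z i ω))
          = fun ω => (z k ω * z k ω) * (z i ω * z i ω) from funext fun ω => by ring]
      exact E22 hmeas hindep hunif (by omega)
    · rw [if_neg hij,
        show (fun ω => z k ω * z i ω * (z k ω * z j ω))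
          = fun ω => (z k ω * z k ω) * (z i ω * z j ω) from funext fun ω => by ring]
      exact E211 hmeas hindep hunif (by omega) (by omega) hij
  · rw [if_neg hkl]
    by_cases hij : i = j
    · subst hij
      rw [if_pos (Or.inl rfl),
        show (fun ω => z k ω * z i ω * (z l ω * z i ω))
          = fun ω => (z i ω * z i ω) * (z k ω * z l ω) from funext fun ω => by ring]
      exact E211 hmeas hindep hunif (by omega) (by omega) hkl
    · by_cases hjk : j = k
      · subst hjk
        rw [if_pos (Or.inr (Or.inl rfl)),
          show (fun ω => z j ω * z i ω * (z l ω * z j ω))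
            = fun ω => (z j ω * z j ω) * (z i ω * z l ω) from funext fun ω => by ring]
        exact E211 hmeas hindep hunif (by omega) (by omega) (by omega)
      · by_cases hil : i = l
        · subst hil
          rw [if_pos (Or.inr (Or.inr rfl)),
            show (fun ω => z k ω * z i ω * (z i ω * z j ω))
              = fun ω => (z i ω * z i ω) * (z k ω * z j ω) from funext fun ω => by ring]
          exact E211 hmeas hindep hunif (by omega) (by omega) (by omega)
        · rw [if_neg (by tauto),
            show (fun ω => z k ω * z i ω * (z l ω * z j ω))
              = fun ω => (z k ω * z i ω) * (z l ω * z j ω) from funext fun ω => by ring]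
          exact E1111 hmeas hindep hunif (by omega) hkl (by omega) (by omega) hij (by omega)

lemma zae (hmeas : ∀ k, Measurable (z k))
    (hunif : ∀ k, Measure.map (z k) ℙ = volume.restrict (Set.Icc (0 : ℝ) 1)) :
    ∀ᵐ ω ∂(ℙ : Measure Ω), ∀ k, z k ω ∈ Set.Icc (0:ℝ) 1 := by
  rw [ae_all_iff]
  intro k
  have hm : MeasurableSet (Set.Icc (0:ℝ) 1) := measurableSet_Icc
  have h1 : (ℙ : Measure Ω) (z k ⁻¹' Set.Icc 0 1) = 1 := by
    rw [← Measure.map_apply (hmeas k) hm, hunif k, Measure.restrict_apply hm,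
      Set.inter_self, Real.volume_Icc]
    norm_num
  have h0 : (ℙ : Measure Ω) ((z k ⁻¹' Set.Icc 0 1)ᶜ) = 0 :=
    (prob_compl_eq_zero_iff ((hmeas k) hm)).2 h1
  exact ae_iff.2 h0

end AuxProb

/-- Theorem 4.2: with `(z k)_{k ≥ 0}` i.i.d. uniform on `[0,1]` and
`Z n = (1/n³) ∑_{k=1}^n k z_k ∑_{j=0}^{k-1} z_j`:
`E[Z n] = (n+1)(2n+1)/(24n²)`, so `E[Z n] → 1/12`; moreover `E[Z n ^ 2] → 1/144`,
hence `Var (Z n) → 0` and `Z n → 1/12` in `L²`. -/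
theorem stmt8 {Ω : Type*} [MeasureSpace Ω] [IsProbabilityMeasure (ℙ : Measure Ω)]
    (z : ℕ → Ω → ℝ) (hmeas : ∀ k, Measurable (z k))
    (hindep : iIndepFun z ℙ)
    (hunif : ∀ k, Measure.map (z k) ℙ = volume.restrict (Set.Icc (0 : ℝ) 1))
    (Z : ℕ → Ω → ℝ)
    (hZ : ∀ n ω, Z n ω = (1 / (n : ℝ) ^ 3) *
      ∑ k ∈ Finset.Icc 1 n, (k : ℝ) * z k ω * ∑ j ∈ Finset.range k, z j ω) :
    (∀ n, 1 ≤ n →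
      (∫ ω, Z n ω ∂ℙ) = ((n : ℝ) + 1) * (2 * n + 1) / (24 * (n : ℝ) ^ 2)) ∧
    Tendsto (fun n => ∫ ω, Z n ω ∂ℙ) atTop (nhds (1 / 12)) ∧
    Tendsto (fun n => ∫ ω, (Z n ω) ^ 2 ∂ℙ) atTop (nhds (1 / 144)) ∧
    Tendsto (fun n => variance (Z n) ℙ) atTop (nhds 0) ∧
    Tendsto (fun n => ∫ ω, (Z n ω - 1 / 12) ^ 2 ∂ℙ) atTop (nhds 0) := by
  have hb := zae hmeas hunif
  -- integrability helpers
  have hint2 : ∀ (c : ℝ) (a b : ℕ), Integrable (fun ω => c * (z a ω * z b ω)) ℙ := by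
    intro c a b
    refine (integrable_const |c|).mono'
      ((measurable_const.mul ((hmeas a).mul (hmeas b)))).aestronglyMeasurable
      (hb.mono fun ω h => ?_)
    have ha := h a; have hbb := h b
    simp only [Set.mem_Icc] at ha hbb
    rw [Real.norm_eq_abs, abs_mul, abs_mul]
    have h1 : |z a ω| ≤ 1 := abs_le.2 ⟨by linarith [ha.1], ha.2⟩
    have h2 : |z b ω| ≤ 1 := abs_le.2 ⟨by linarith [hbb.1], hbb.2⟩
    have h3 : |z a ω| * |z b ω| ≤ 1 :=
      mul_le_one₀ h1 (abs_nonneg _) h2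
    calc |c| * (|z a ω| * |z b ω|) ≤ |c| * 1 :=
          mul_le_mul_of_nonneg_left h3 (abs_nonneg c)
      _ = |c| := mul_one _
  have hint4 : ∀ (c : ℝ) (a b a' b' : ℕ),
      Integrable (fun ω => c * (z a ω * z b ω * (z a' ω * z b' ω))) ℙ := by
    intro c a b a' b'
    refine (integrable_const |c|).mono'
      (measurable_const.mul ((((hmeas a).mul (hmeas b)).mul
        ((hmeas a').mul (hmeas b'))))).aestronglyMeasurable
      (hb.mono fun ω h => ?_)
    have h01 : ∀ t : ℕ, |z t ω| ≤ 1 := by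
      intro t
      have := h t; simp only [Set.mem_Icc] at this
      exact abs_le.2 ⟨by linarith [this.1], this.2⟩
    rw [Real.norm_eq_abs, abs_mul, abs_mul, abs_mul, abs_mul]
    have hab : |z a ω| * |z b ω| ≤ 1 := mul_le_one₀ (h01 a) (abs_nonneg _) (h01 b)
    have hab' : |z a' ω| * |z b' ω| ≤ 1 := mul_le_one₀ (h01 a') (abs_nonneg _) (h01 b')
    have hq : |z a ω| * |z b ω| * (|z a' ω| * |z b' ω|) ≤ 1 :=
      mul_le_one₀ hab (by positivity) hab'
    calc |c| * (|z a ω| * |z b ω| * (|z a' ω| * |z b' ω|)) ≤ |c| * 1 :=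
          mul_le_mul_of_nonneg_left hq (abs_nonneg c)
      _ = |c| := mul_one _
  -- first moment
  have hI1 : ∀ n, 1 ≤ n →
      (∫ ω, Z n ω ∂ℙ) = ((n : ℝ) + 1) * (2 * n + 1) / (24 * (n : ℝ) ^ 2) := by
    intro n hn
    have hn0 : (n:ℝ) ≠ 0 := Nat.cast_ne_zero.2 (by omega)
    have hzeq : ∫ ω, Z n ω ∂ℙ = ∫ ω, ∑ k ∈ Finset.Icc 1 n, ∑ j ∈ Finset.range k,
        (((1/(n:ℝ)^3) * (k:ℝ)) * (z k ω * z j ω)) ∂ℙ := by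
      apply integral_congr_ae (Eventually.of_forall fun ω => ?_)
      rw [hZ]
      simp only [Finset.mul_sum]
      exact Finset.sum_congr rfl fun k _ => Finset.sum_congr rfl fun j _ => by ring
    rw [hzeq, integral_finset_sum _ (fun k _ => integrable_finset_sum _ (fun j _ => hint2 _ k j))]
    have hterm : ∀ k ∈ Finset.Icc 1 n,
        (∫ ω, ∑ j ∈ Finset.range k, (((1/(n:ℝ)^3) * (k:ℝ)) * (z k ω * z j ω)) ∂ℙ)
        = ((1:ℝ)/(4*(n:ℝ)^3)) * (k:ℝ)^2 := by
      intro k hk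
      rw [integral_finset_sum _ (fun j _ => hint2 _ k j)]
      have : ∀ j ∈ Finset.range k,
          (∫ ω, ((1/(n:ℝ)^3) * (k:ℝ)) * (z k ω * z j ω) ∂ℙ)
          = ((1/(n:ℝ)^3) * (k:ℝ)) * (1/4) := by
        intro j hj
        rw [integral_const_mul,
          E2 hmeas hindep hunif (by simp only [Finset.mem_range] at hj; omega)]
      rw [Finset.sum_congr rfl this, Finset.sum_const, Finset.card_range, nsmul_eq_mul]
      ring
    rw [Finset.sum_congr rfl hterm, ← Finset.mul_sum, sumsq]
    field_simp
    ring
  -- second moment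
  have hI2 : ∀ n, 1 ≤ n → (∫ ω, (Z n ω)^2 ∂ℙ)
      = (20*(n:ℝ)^6+88*(n:ℝ)^5+125*(n:ℝ)^4+70*(n:ℝ)^3+15*(n:ℝ)^2+2*(n:ℝ))/(2880*(n:ℝ)^6) := by
    intro n hn
    have hn0 : (n:ℝ) ≠ 0 := Nat.cast_ne_zero.2 (by omega)
    have hzeq : ∫ ω, (Z n ω)^2 ∂ℙ = ∫ ω, ((1/(n:ℝ)^3)*(1/(n:ℝ)^3)) *
        ∑ k ∈ Finset.Icc 1 n, ∑ l ∈ Finset.Icc 1 n, ∑ i ∈ Finset.range k,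
          ∑ j ∈ Finset.range l,
            (((k:ℝ)*(l:ℝ)) * (z k ω * z i ω * (z l ω * z j ω))) ∂ℙ := by
      apply integral_congr_ae (Eventually.of_forall fun ω => ?_)
      rw [hZ]
      rw [mul_pow, sq (∑ k ∈ Finset.Icc 1 n, (k:ℝ) * z k ω * ∑ j ∈ Finset.range k, z j ω),
        Finset.sum_mul_sum]
      have : (1/(n:ℝ)^3)^2 = (1/(n:ℝ)^3)*(1/(n:ℝ)^3) := sq _
      rw [this]
      congr 1
      refine Finset.sum_congr rfl fun k _ => Finset.sum_congr rfl fun l _ => ?_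
      rw [show (k:ℝ) * z k ω * (∑ i ∈ Finset.range k, z i ω) *
          ((l:ℝ) * z l ω * ∑ j ∈ Finset.range l, z j ω)
          = (∑ i ∈ Finset.range k, (k:ℝ) * z k ω * z i ω) *
            (∑ j ∈ Finset.range l, (l:ℝ) * z l ω * z j ω) by
        rw [← Finset.mul_sum, ← Finset.mul_sum]; try ring]
      rw [Finset.sum_mul_sum]
      exact Finset.sum_congr rfl fun i _ => Finset.sum_congr rfl fun j _ => by ring
    rw [hzeq, integral_const_mul,
      integral_finset_sum _ (fun k _ => integrable_finset_sum _ (fun l _ =>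
        integrable_finset_sum _ (fun i _ => integrable_finset_sum _ (fun j _ =>
          hint4 _ k i l j))))]
    have hkl : ∀ k ∈ Finset.Icc 1 n, ∀ l ∈ Finset.Icc 1 n,
        (∫ ω, ∑ i ∈ Finset.range k, ∑ j ∈ Finset.range l,
          (((k:ℝ)*(l:ℝ)) * (z k ω * z i ω * (z l ω * z j ω))) ∂ℙ)
        = (k:ℝ)*(l:ℝ)*svq k l := by
      intro k _ l _
      rw [integral_finset_sum _ (fun i _ => integrable_finset_sum _ (fun j _ =>
        hint4 _ k i l j))]
      have hstep : ∀ i ∈ Finset.range k,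
          (∫ ω, ∑ j ∈ Finset.range l,
            (((k:ℝ)*(l:ℝ)) * (z k ω * z i ω * (z l ω * z j ω))) ∂ℙ)
          = ∑ j ∈ Finset.range l, ((k:ℝ)*(l:ℝ)) *
              (if k = l then (if i = j then (1:ℝ)/9 else 1/12)
               else if i = j ∨ j = k ∨ i = l then (1:ℝ)/12 else 1/16) := by
        intro i hi
        rw [integral_finset_sum _ (fun j _ => hint4 _ k i l j)]
        refine Finset.sum_congr rfl fun j hj => ?_
        rw [integral_const_mul, quad hmeas hindep hunif
          (Finset.mem_range.1 hi) (Finset.mem_range.1 hj)]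
      rw [Finset.sum_congr rfl hstep]
      have : ∑ i ∈ Finset.range k, ∑ j ∈ Finset.range l, ((k:ℝ)*(l:ℝ)) *
          (if k = l then (if i = j then (1:ℝ)/9 else 1/12)
           else if i = j ∨ j = k ∨ i = l then (1:ℝ)/12 else 1/16)
          = ((k:ℝ)*(l:ℝ)) * ∑ i ∈ Finset.range k, ∑ j ∈ Finset.range l,
            (if k = l then (if i = j then (1:ℝ)/9 else 1/12)
             else if i = j ∨ j = k ∨ i = l then (1:ℝ)/12 else 1/16) := by
        rw [Finset.mul_sum]
        exact Finset.sum_congr rfl fun i _ => (Finset.mul_sum _ _ _).symm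
      rw [this, slem]
    have hk2 : ∀ k ∈ Finset.Icc 1 n,
        (∫ ω, ∑ l ∈ Finset.Icc 1 n, ∑ i ∈ Finset.range k, ∑ j ∈ Finset.range l,
          (((k:ℝ)*(l:ℝ)) * (z k ω * z i ω * (z l ω * z j ω))) ∂ℙ)
        = ∑ l ∈ Finset.Icc 1 n, (k:ℝ)*(l:ℝ)*svq k l := by
      intro k hk
      rw [integral_finset_sum _ (fun l _ => integrable_finset_sum _ (fun i _ =>
        integrable_finset_sum _ (fun j _ => hint4 _ k i l j)))]
      exact Finset.sum_congr rfl (hkl k hk)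
    rw [Finset.sum_congr rfl hk2, bigsum]
    rw [eq_div_iff (by positivity : (2880:ℝ)*(n:ℝ)^6 ≠ 0)]
    field_simp
  -- measurability of Z n
  have hZm : ∀ n, Measurable (Z n) := by
    intro n
    have : Z n = fun ω => (1 / (n : ℝ) ^ 3) *
        ∑ k ∈ Finset.Icc 1 n, (k : ℝ) * z k ω * ∑ j ∈ Finset.range k, z j ω :=
      funext fun ω => hZ n ω
    rw [this]
    exact measurable_const.mul (Finset.measurable_sum _ fun k _ =>
      (measurable_const.mul (hmeas k)).mul (Finset.measurable_sum _ fun j _ => hmeas j))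
  -- a.e. bound |Z n ω| ≤ 1
  have habs : ∀ n ω, (∀ k, z k ω ∈ Set.Icc (0:ℝ) 1) → |Z n ω| ≤ 1 := by
    intro n ω h
    have h01 : ∀ t : ℕ, |z t ω| ≤ 1 := by
      intro t
      have := h t; simp only [Set.mem_Icc] at this
      exact abs_le.2 ⟨by linarith [this.1], this.2⟩
    rw [hZ, abs_mul]
    rcases Nat.eq_zero_or_pos n with h0 | hpos
    · subst h0; simp
    have hn1 : (1:ℝ) ≤ (n:ℝ) := by exact_mod_cast hpos
    have hsum : |∑ k ∈ Finset.Icc 1 n, (k:ℝ) * z k ω * ∑ j ∈ Finset.range k, z j ω|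
        ≤ (n:ℝ) * ((n:ℝ) * (n:ℝ)) := by
      calc |∑ k ∈ Finset.Icc 1 n, (k:ℝ) * z k ω * ∑ j ∈ Finset.range k, z j ω|
          ≤ ∑ k ∈ Finset.Icc 1 n, |(k:ℝ) * z k ω * ∑ j ∈ Finset.range k, z j ω| :=
            Finset.abs_sum_le_sum_abs _ _
        _ ≤ ∑ k ∈ Finset.Icc 1 n, (n:ℝ) * (n:ℝ) := by
            refine Finset.sum_le_sum fun k hk => ?_
            simp only [Finset.mem_Icc] at hk
            have hkn : (k:ℝ) ≤ (n:ℝ) := by exact_mod_cast hk.2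
            have hS : |∑ j ∈ Finset.range k, z j ω| ≤ (n:ℝ) := by
              calc |∑ j ∈ Finset.range k, z j ω| ≤ ∑ j ∈ Finset.range k, |z j ω| :=
                    Finset.abs_sum_le_sum_abs _ _
                _ ≤ ∑ _j ∈ Finset.range k, (1:ℝ) := Finset.sum_le_sum fun j _ => h01 j
                _ = (k:ℝ) := by simp
                _ ≤ (n:ℝ) := hkn
            rw [abs_mul, abs_mul]
            have habk : |(k:ℝ)| = (k:ℝ) := abs_of_nonneg (by positivity)
            rw [habk]
            calc (k:ℝ) * |z k ω| * |∑ j ∈ Finset.range k, z j ω|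
                ≤ (n:ℝ) * 1 * (n:ℝ) := by
                  apply mul_le_mul
                  · apply mul_le_mul hkn (h01 k) (abs_nonneg _) (by positivity)
                  · exact hS
                  · exact abs_nonneg _
                  · positivity
              _ = (n:ℝ) * (n:ℝ) := by ring
        _ = (n:ℝ) * ((n:ℝ) * (n:ℝ)) := by
            rw [Finset.sum_const, Nat.card_Icc, nsmul_eq_mul]
            simp
    have hc : |1/(n:ℝ)^3| = 1/(n:ℝ)^3 := abs_of_nonneg (by positivity)
    rw [hc]
    calc (1/(n:ℝ)^3) * |∑ k ∈ Finset.Icc 1 n, (k:ℝ) * z k ω * ∑ j ∈ Finset.range k, z j ω|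
        ≤ (1/(n:ℝ)^3) * ((n:ℝ) * ((n:ℝ) * (n:ℝ))) :=
          mul_le_mul_of_nonneg_left hsum (by positivity)
      _ = 1 := by field_simp
  have haeb : ∀ n, ∀ᵐ ω ∂(ℙ : Measure Ω), ‖Z n ω‖ ≤ 1 := fun n =>
    hb.mono fun ω h => by rw [Real.norm_eq_abs]; exact habs n ω h
  have hmem : ∀ n, MemLp (Z n) 2 ℙ := fun n =>
    MemLp.of_bound (hZm n).aestronglyMeasurable 1 (haeb n)
  have hIntZ : ∀ n, Integrable (Z n) ℙ := fun n =>
    (integrable_const (1:ℝ)).mono' (hZm n).aestronglyMeasurable (haeb n)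
  have hIntZ2 : ∀ n, Integrable (fun ω => (Z n ω)^2) ℙ := by
    intro n
    refine (integrable_const (1:ℝ)).mono' ((hZm n).pow_const 2).aestronglyMeasurable
      (hb.mono fun ω h => ?_)
    rw [Real.norm_eq_abs, abs_pow]
    calc |Z n ω|^2 ≤ 1^2 := by
          apply pow_le_pow_left₀ (abs_nonneg _) (habs n ω h)
      _ = 1 := one_pow 2
  -- limits
  have hu : Tendsto (fun n : ℕ => 1/(n:ℝ)) atTop (nhds 0) := tendsto_one_div_atTop_nhds_zero_nat
  have t1 : Tendsto (fun n => ∫ ω, Z n ω ∂ℙ) atTop (nhds (1/12)) := by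
    have hf : Continuous (fun x : ℝ => (1+x)*(2+x)/24) := by fun_prop
    have key := (hf.tendsto 0).comp hu
    have hval : ((1:ℝ)+0)*(2+0)/24 = 1/12 := by norm_num
    rw [hval] at key
    refine key.congr' ?_
    filter_upwards [eventually_ge_atTop 1] with n hn
    have hn0 : (n:ℝ) ≠ 0 := Nat.cast_ne_zero.2 (by omega)
    simp only [Function.comp_apply]
    rw [hI1 n hn]
    field_simp
  have t2 : Tendsto (fun n => ∫ ω, (Z n ω)^2 ∂ℙ) atTop (nhds (1/144)) := by
    have hf : Continuous (fun x : ℝ =>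
        (20+88*x+125*x^2+70*x^3+15*x^4+2*x^5)/2880) := by fun_prop
    have key := (hf.tendsto 0).comp hu
    have hval : ((20:ℝ)+88*0+125*0^2+70*0^3+15*0^4+2*0^5)/2880 = 1/144 := by norm_num
    rw [hval] at key
    refine key.congr' ?_
    filter_upwards [eventually_ge_atTop 1] with n hn
    have hn0 : (n:ℝ) ≠ 0 := Nat.cast_ne_zero.2 (by omega)
    simp only [Function.comp_apply]
    rw [hI2 n hn]
    field_simp
  have hvar : ∀ n, 1 ≤ n → variance (Z n) ℙ
      = (∫ ω, (Z n ω)^2 ∂ℙ) - (∫ ω, Z n ω ∂ℙ)^2 := by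
    intro n _
    have h := variance_eq_sub (hmem n)
    simpa only [Pi.pow_apply] using h
  have t3 : Tendsto (fun n => variance (Z n) ℙ) atTop (nhds 0) := by
    have hsq : Tendsto (fun n => (∫ ω, Z n ω ∂ℙ)^2) atTop (nhds ((1/12)^2)) := by
      have := t1.mul t1
      simpa only [← pow_two] using this
    have key := t2.sub hsq
    have hval : (1:ℝ)/144 - (1/12)^2 = 0 := by norm_num
    rw [hval] at key
    refine key.congr' ?_
    filter_upwards [eventually_ge_atTop 1] with n hn
    exact (hvar n hn).symm
  have hL2 : ∀ n, 1 ≤ n → ∫ ω, (Z n ω - 1/12)^2 ∂ℙ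
      = (∫ ω, (Z n ω)^2 ∂ℙ) - (1/6) * (∫ ω, Z n ω ∂ℙ) + 1/144 := by
    intro n _
    have hfe : (fun ω => (Z n ω - 1/12)^2)
        = fun ω => ((Z n ω)^2 - (1/6) * Z n ω) + 1/144 := funext fun ω => by ring
    rw [hfe]
    have hg1 : Integrable (fun ω => (Z n ω)^2 - (1/6) * Z n ω) ℙ :=
      (hIntZ2 n).sub ((hIntZ n).const_mul (1/6))
    have hg2 : Integrable (fun ω => (1/6) * Z n ω) ℙ := (hIntZ n).const_mul (1/6)
    rw [integral_add hg1 (integrable_const _), integral_sub (hIntZ2 n) hg2,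
      integral_const_mul, integral_const]
    simp [measure_univ]
  have t4 : Tendsto (fun n => ∫ ω, (Z n ω - 1/12)^2 ∂ℙ) atTop (nhds 0) := by
    have key : Tendsto (fun n => (∫ ω, (Z n ω)^2 ∂ℙ) - (1/6) * (∫ ω, Z n ω ∂ℙ) + 1/144)
        atTop (nhds ((1/144 : ℝ) - (1/6)*(1/12) + 1/144)) :=
      (t2.sub (t1.const_mul (1/6))).add tendsto_const_nhds
    have hval : (1/144 : ℝ) - (1/6)*(1/12) + 1/144 = 0 := by norm_num
    rw [hval] at key
    refine key.congr' ?_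
    filter_upwards [eventually_ge_atTop 1] with n hn
    exact (hL2 n hn).symm
  exact ⟨hI1, t1, t2, t3, t4⟩
end

section
/- Fix an integer n ≥ 3 and a real s > 0, and let a : [0,1] → ℝ be continuous. Let (x₁,…,x_{n−1}) be uniformly distributed on Δ_{ns} = {x ∈ ℝ^{n−1} : x_i ≥ 0, ∑ x_i ≤ ns}, set x_n = ns − ∑_{i=1}^{n−1} x_i, write a_k = a(k/n), and define Y_n = (1/n)·∑_{k=1}^n a_k x_k. Then E[Y_n] = (s/n)·∑_{k=1}^n a_k and E[Y_n²] = (s²/(n(n+1)))·( (∑_{k=1}^n a_k)² + ∑_{k=1}^n a_k² ). Consequently lim_{n→∞} E[Y_n] = s·∫_0^1 a(t)dt, lim_{n→∞} E[Y_n²] = (s·∫_0^1 a(t)dt)², and lim_{n→∞} Var(Y_n) = 0. -/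
open MeasureTheory ProbabilityTheory Filter

/-- The scaled corner simplex `{x ∈ ℝ^m : xᵢ ≥ 0, ∑ xᵢ ≤ h}`. -/
def scaledCornerSimplex (m : ℕ) (h : ℝ) : Set (Fin m → ℝ) :=
  {x | (∀ i, 0 ≤ x i) ∧ ∑ i, x i ≤ h}

/-- The uniform probability measure (normalized Lebesgue measure) on the scaled
corner simplex. -/
noncomputable def scaledCornerSimplexUnif (m : ℕ) (h : ℝ) : Measure (Fin m → ℝ) :=
  (volume (scaledCornerSimplex m h))⁻¹ • volume.restrict (scaledCornerSimplex m h)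

/-- `Y n x = (1/n) ∑_{k=1}^n a(k/n) x_k` where `x₁, …, x_{n-1}` are the coordinates
of `x` and `x_n = ns - ∑_{i=1}^{n-1} xᵢ`. -/
noncomputable def simplexYa (a : ℝ → ℝ) (s : ℝ) (n : ℕ) (x : Fin (n - 1) → ℝ) : ℝ :=
  (1 / (n : ℝ)) *
    ((∑ i : Fin (n - 1), a (((i : ℕ) + 1 : ℝ) / n) * x i) +
      a ((n : ℝ) / n) * ((n : ℝ) * s - ∑ i, x i))

namespace SCS
local notation "S" => scaledCornerSimplex

lemma isClosed (m : ℕ) (h : ℝ) : IsClosed (S m h) := by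
  have h1 : IsClosed {x : Fin m → ℝ | ∀ i, 0 ≤ x i} := by
    have : {x : Fin m → ℝ | ∀ i, 0 ≤ x i} = ⋂ i, {x | 0 ≤ x i} := by
      ext x; simp
    rw [this]
    exact isClosed_iInter fun i => isClosed_le continuous_const (continuous_apply i)
  have h2 : IsClosed {x : Fin m → ℝ | ∑ i, x i ≤ h} :=
    isClosed_le (by continuity) continuous_const
  exact h1.inter h2

lemma subset_box (m : ℕ) (h : ℝ) :
    S m h ⊆ Set.Icc (0 : Fin m → ℝ) (fun _ => max h 0) := by
  rintro x ⟨hx0, hxs⟩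
  refine ⟨fun i => hx0 i, fun i => ?_⟩
  calc x i ≤ ∑ j, x j := Finset.single_le_sum (fun j _ => hx0 j) (Finset.mem_univ i)
  _ ≤ h := hxs
  _ ≤ max h 0 := le_max_left _ _

lemma isCompact (m : ℕ) (h : ℝ) : IsCompact (S m h) :=
  (isCompact_Icc).of_isClosed_subset (isClosed m h) (subset_box m h)

lemma measurableSet (m : ℕ) (h : ℝ) : MeasurableSet (S m h) :=
  (isClosed m h).measurableSet

lemma empty_of_neg {m : ℕ} {h : ℝ} (hh : h < 0) : S m h = ∅ := by
  ext x
  simp only [scaledCornerSimplex, Set.mem_setOf_eq, Set.mem_empty_iff_false, iff_false]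
  rintro ⟨hx0, hxs⟩
  exact absurd (le_trans (Finset.sum_nonneg fun i _ => hx0 i) hxs) (not_le.2 hh)

lemma integrableOn {m : ℕ} {h : ℝ} {F : (Fin m → ℝ) → ℝ} (hF : Continuous F) :
    IntegrableOn F (S m h) :=
  hF.continuousOn.integrableOn_compact (isCompact m h)

lemma volume_lt_top (m : ℕ) (h : ℝ) : volume (S m h) < ⊤ :=
  (isCompact m h).measure_lt_top

lemma slice (m : ℕ) (h : ℝ) {F : (Fin (m+1) → ℝ) → ℝ} (hF : Continuous F) :
    ∫ x in S (m+1) h, F x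
      = ∫ t in Set.Icc (0:ℝ) h, ∫ y in S m (h - t), F (Fin.cons t y) := by
  have hInt : Integrable (Set.indicator (S (m+1) h) F) :=
    (integrable_indicator_iff (measurableSet _ _)).2 (integrableOn hF)
  have vp := (volume_preserving_piFinSuccAbove (fun _ : Fin (m+1) => ℝ) 0).symm
  have hcons : ∀ (t : ℝ) (y : Fin m → ℝ),
      (MeasurableEquiv.piFinSuccAbove (fun _ : Fin (m+1) => ℝ) 0).symm (t, y)
        = Fin.cons t y := by
    intro t y
    simp [MeasurableEquiv.piFinSuccAbove_symm_apply, Fin.insertNthEquiv, Fin.insertNth_zero]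
  have key : (∫ x in S (m+1) h, F x)
      = ∫ z : ℝ × (Fin m → ℝ),
          Set.indicator (S (m+1) h) F (Fin.cons z.1 z.2) := by
    rw [← integral_indicator (measurableSet _ _), ← vp.integral_comp']
    congr 1
    ext z
    rw [hcons z.1 z.2]
  rw [key]
  have hInt2 : Integrable (fun z : ℝ × (Fin m → ℝ) =>
      Set.indicator (S (m+1) h) F (Fin.cons z.1 z.2)) (volume.prod volume) := by
    have := (vp.integrable_comp_emb (MeasurableEquiv.measurableEmbedding _)).2 hInt
    refine this.congr ?_
    filter_upwards with z
    rw [Function.comp_apply, hcons z.1 z.2]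
  have hset : ∀ t : ℝ, {y : Fin m → ℝ | Fin.cons t y ∈ S (m+1) h}
      = if 0 ≤ t then S m (h - t) else ∅ := by
    intro t
    ext y
    simp only [Set.mem_setOf_eq, scaledCornerSimplex, Fin.forall_fin_succ, Fin.cons_zero,
      Fin.cons_succ, Fin.sum_cons]
    split_ifs with ht
    · simp only [Set.mem_setOf_eq]
      constructor
      · rintro ⟨⟨-, hy⟩, hsum⟩; exact ⟨hy, by linarith⟩
      · rintro ⟨hy, hsum⟩; exact ⟨⟨ht, hy⟩, by linarith⟩
    · simp only [Set.mem_empty_iff_false, iff_false]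
      rintro ⟨⟨ht', -⟩, -⟩; exact ht ht'
  rw [Measure.volume_eq_prod, MeasureTheory.integral_prod _ hInt2]
  rw [← integral_indicator measurableSet_Icc]
  congr 1
  ext t
  have : (fun y : Fin m → ℝ => Set.indicator (S (m+1) h) F (Fin.cons t y))
      = Set.indicator (if 0 ≤ t then S m (h - t) else ∅) (fun y => F (Fin.cons t y)) := by
    ext y
    rw [← hset t]
    by_cases hy : Fin.cons t y ∈ S (m+1) h <;>
      simp [Set.indicator_apply, hy]
  rw [this]
  by_cases ht : 0 ≤ t
  · rw [if_pos ht, integral_indicator (measurableSet _ _)]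
    by_cases ht2 : t ≤ h
    · rw [Set.indicator_of_mem (Set.mem_Icc.mpr ⟨ht, ht2⟩)]
    · rw [Set.indicator_of_notMem (by simp [Set.mem_Icc, ht2])]
      rw [empty_of_neg (by linarith : h - t < 0)]
      simp
  · rw [if_neg ht, Set.indicator_empty, Set.indicator_of_notMem (by simp [Set.mem_Icc, ht])]
    simp

end SCS

namespace SCS2
open SCS intervalIntegral
local notation "S" => scaledCornerSimplex

lemma J0 (k : ℕ) (h : ℝ) : ∫ t in (0:ℝ)..h, (h - t)^k = h^(k+1)/((k:ℝ)+1) := by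
  rw [intervalIntegral.integral_comp_sub_left (fun x => x ^ k) h]
  simp [integral_pow]

lemma J1 (k : ℕ) (h : ℝ) :
    ∫ t in (0:ℝ)..h, t * (h - t)^k = h^(k+2)/(((k:ℝ)+1)*((k:ℝ)+2)) := by
  have e : (fun t : ℝ => t * (h - t)^k)
      = fun t => h * (h - t)^k - (h - t)^(k+1) := by
    funext t; ring
  rw [e, intervalIntegral.integral_sub (Continuous.intervalIntegrable (by fun_prop) _ _) (Continuous.intervalIntegrable (by fun_prop) _ _),
    intervalIntegral.integral_const_mul, J0, J0]
  have h1 : ((k:ℝ)+1) ≠ 0 := by positivity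
  have h2 : ((k:ℝ)+2) ≠ 0 := by positivity
  field_simp
  push_cast
  ring

lemma J2 (k : ℕ) (h : ℝ) :
    ∫ t in (0:ℝ)..h, t^2 * (h - t)^k
      = 2*h^(k+3)/(((k:ℝ)+1)*((k:ℝ)+2)*((k:ℝ)+3)) := by
  have e : (fun t : ℝ => t^2 * (h - t)^k)
      = fun t => h^2 * (h - t)^k - 2*h*(h - t)^(k+1) + (h - t)^(k+2) := by
    funext t; ring
  rw [e, intervalIntegral.integral_add (Continuous.intervalIntegrable (by fun_prop) _ _) (Continuous.intervalIntegrable (by fun_prop) _ _),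
    intervalIntegral.integral_sub (Continuous.intervalIntegrable (by fun_prop) _ _) (Continuous.intervalIntegrable (by fun_prop) _ _),
    intervalIntegral.integral_const_mul, intervalIntegral.integral_const_mul, J0, J0, J0]
  have h1 : ((k:ℝ)+1) ≠ 0 := by positivity
  have h2 : ((k:ℝ)+2) ≠ 0 := by positivity
  have h3 : ((k:ℝ)+3) ≠ 0 := by positivity
  field_simp
  push_cast
  ring

lemma icc_int {h : ℝ} (hh : 0 ≤ h) (f : ℝ → ℝ) :
    ∫ t in Set.Icc (0:ℝ) h, f t = ∫ t in (0:ℝ)..h, f t := by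
  rw [intervalIntegral.integral_of_le hh, MeasureTheory.integral_Icc_eq_integral_Ioc]

lemma setIntegral_one (m : ℕ) {h : ℝ} (hh : 0 ≤ h) :
    ∫ _x in S m h, (1:ℝ) = h^m / (Nat.factorial m : ℝ) := by
  induction m generalizing h with
  | zero =>
    have hu : S 0 h = Set.univ := by
      ext x
      simp [scaledCornerSimplex, hh]
    rw [hu, MeasureTheory.setIntegral_const, smul_eq_mul, mul_one]
    simp [MeasureTheory.volume_pi, MeasureTheory.Measure.pi_univ, Measure.real]
  | succ m IH =>
    rw [slice m h continuous_const]
    have e : Set.EqOn (fun t => ∫ _y in S m (h - t), (1:ℝ))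
        (fun t => (h - t)^m / (Nat.factorial m : ℝ)) (Set.Icc 0 h) := by
      intro t ht
      exact IH (by linarith [ht.2] : (0:ℝ) ≤ h - t)
    rw [MeasureTheory.setIntegral_congr_fun measurableSet_Icc e, icc_int hh]
    have : ∀ t : ℝ, (h - t)^m / (Nat.factorial m : ℝ)
        = (1 / (Nat.factorial m : ℝ)) * (h-t)^m := by intro t; ring
    simp_rw [this]
    rw [intervalIntegral.integral_const_mul, J0]
    have hf : (Nat.factorial m : ℝ) ≠ 0 := by positivity
    have hm : ((m:ℝ)+1) ≠ 0 := by positivity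
    have hfs : ((m+1).factorial : ℝ) = ((m:ℝ)+1) * (m.factorial : ℝ) := by
      rw [Nat.factorial_succ]; push_cast; ring
    rw [hfs]
    field_simp
    try ring
    try tauto

lemma volume_toReal (m : ℕ) {h : ℝ} (hh : 0 ≤ h) :
    (volume (S m h)).toReal = h^m / (Nat.factorial m : ℝ) := by
  have := setIntegral_one m hh
  rwa [MeasureTheory.setIntegral_const, smul_eq_mul, mul_one] at this

end SCS2

namespace SCS2
open SCS
local notation "S" => scaledCornerSimplex

lemma fact_ne (m : ℕ) : (Nat.factorial m : ℝ) ≠ 0 :=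
  Nat.cast_ne_zero.2 m.factorial_pos.ne'

lemma fact1 (m : ℕ) : ((m+1).factorial : ℝ) = ((m:ℝ)+1) * m.factorial := by
  rw [Nat.factorial_succ]; push_cast; ring

lemma int_coord (m : ℕ) {h : ℝ} (hh : 0 ≤ h) (i : Fin m) :
    ∫ x in S m h, x i = h^(m+1) / (Nat.factorial (m+1) : ℝ) := by
  induction m generalizing h with
  | zero => exact i.elim0
  | succ m IH =>
    rw [slice m h (continuous_apply i)]
    rcases Fin.eq_zero_or_eq_succ i with rfl | ⟨j, rfl⟩
    · have e : Set.EqOn (fun t => ∫ y in S m (h - t), (Fin.cons t y : Fin (m+1) → ℝ) 0)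
          (fun t => (1 / (Nat.factorial m : ℝ)) * (t * (h - t)^m)) (Set.Icc 0 h) := by
        intro t ht
        simp only [Fin.cons_zero]
        rw [MeasureTheory.setIntegral_const, smul_eq_mul, measureReal_def,
          volume_toReal m (by linarith [ht.2] : (0:ℝ) ≤ h - t)]
        ring
      rw [MeasureTheory.setIntegral_congr_fun measurableSet_Icc e, icc_int hh,
        intervalIntegral.integral_const_mul, J1]
      rw [fact1 (m+1), fact1 m]
      have h1 : ((m:ℝ)+1) ≠ 0 := by positivity
      have h2 : ((m:ℝ)+2) ≠ 0 := by positivity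
      push_cast
      field_simp
      try ring
      try tauto
    · have e : Set.EqOn (fun t => ∫ y in S m (h - t), (Fin.cons t y : Fin (m+1) → ℝ) j.succ)
          (fun t => (1 / (Nat.factorial (m+1) : ℝ)) * ((h - t)^(m+1))) (Set.Icc 0 h) := by
        intro t ht
        simp only [Fin.cons_succ]
        rw [IH (by linarith [ht.2] : (0:ℝ) ≤ h - t) j]
        ring
      rw [MeasureTheory.setIntegral_congr_fun measurableSet_Icc e, icc_int hh,
        intervalIntegral.integral_const_mul, J0]
      rw [fact1 (m+1), fact1 m]
      have h1 : ((m:ℝ)+1) ≠ 0 := by positivity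
      have h2 : ((m:ℝ)+2) ≠ 0 := by positivity
      have := fact_ne m
      push_cast
      field_simp
      try ring
      try tauto

lemma int_sq (m : ℕ) {h : ℝ} (hh : 0 ≤ h) (i : Fin m) :
    ∫ x in S m h, (x i)^2 = 2 * h^(m+2) / (Nat.factorial (m+2) : ℝ) := by
  induction m generalizing h with
  | zero => exact i.elim0
  | succ m IH =>
    rw [slice m h (by fun_prop : Continuous fun x : Fin (m+1) → ℝ => (x i)^2)]
    rcases Fin.eq_zero_or_eq_succ i with rfl | ⟨j, rfl⟩
    · have e : Set.EqOn (fun t => ∫ y in S m (h - t), ((Fin.cons t y : Fin (m+1) → ℝ) 0)^2)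
          (fun t => (1 / (Nat.factorial m : ℝ)) * (t^2 * (h - t)^m)) (Set.Icc 0 h) := by
        intro t ht
        simp only [Fin.cons_zero]
        rw [MeasureTheory.setIntegral_const, smul_eq_mul, measureReal_def,
          volume_toReal m (by linarith [ht.2] : (0:ℝ) ≤ h - t)]
        ring
      rw [MeasureTheory.setIntegral_congr_fun measurableSet_Icc e, icc_int hh,
        intervalIntegral.integral_const_mul, J2]
      rw [fact1 (m+2), fact1 (m+1), fact1 m]
      have h1 : ((m:ℝ)+1) ≠ 0 := by positivity
      have h2 : ((m:ℝ)+2) ≠ 0 := by positivity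
      have h3 : ((m:ℝ)+3) ≠ 0 := by positivity
      have := fact_ne m
      push_cast
      field_simp
      try ring
      try tauto
    · have e : Set.EqOn (fun t => ∫ y in S m (h - t), ((Fin.cons t y : Fin (m+1) → ℝ) j.succ)^2)
          (fun t => (2 / (Nat.factorial (m+2) : ℝ)) * ((h - t)^(m+2))) (Set.Icc 0 h) := by
        intro t ht
        simp only [Fin.cons_succ]
        rw [IH (by linarith [ht.2] : (0:ℝ) ≤ h - t) j]
        ring
      rw [MeasureTheory.setIntegral_congr_fun measurableSet_Icc e, icc_int hh,
        intervalIntegral.integral_const_mul, J0]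
      rw [fact1 (m+2), fact1 (m+1), fact1 m]
      have h1 : ((m:ℝ)+1) ≠ 0 := by positivity
      have h2 : ((m:ℝ)+2) ≠ 0 := by positivity
      have h3 : ((m:ℝ)+3) ≠ 0 := by positivity
      have := fact_ne m
      push_cast
      field_simp
      try ring
      try tauto

lemma int_cross (m : ℕ) {h : ℝ} (hh : 0 ≤ h) {i j : Fin m} (hij : i ≠ j) :
    ∫ x in S m h, x i * x j = h^(m+2) / (Nat.factorial (m+2) : ℝ) := by
  induction m generalizing h with
  | zero => exact i.elim0
  | succ m IH =>
    have aux : ∀ j' : Fin m, ∫ x in S (m+1) h, x 0 * x j'.succ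
        = h^(m+3) / (Nat.factorial (m+3) : ℝ) := by
      intro j'
      rw [slice m h (by fun_prop : Continuous fun x : Fin (m+1) → ℝ => x 0 * x j'.succ)]
      have e : Set.EqOn (fun t => ∫ y in S m (h - t), (Fin.cons t y : Fin (m+1) → ℝ) 0 * (Fin.cons t y : Fin (m+1) → ℝ) j'.succ)
          (fun t => (1 / (Nat.factorial (m+1) : ℝ)) * (t * (h - t)^(m+1))) (Set.Icc 0 h) := by
        intro t ht
        simp only [Fin.cons_zero, Fin.cons_succ]
        rw [MeasureTheory.integral_const_mul, int_coord m (by linarith [ht.2] : (0:ℝ) ≤ h - t) j']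
        ring
      rw [MeasureTheory.setIntegral_congr_fun measurableSet_Icc e, icc_int hh,
        intervalIntegral.integral_const_mul, J1]
      rw [fact1 (m+2), fact1 (m+1), fact1 m]
      have h1 : ((m:ℝ)+1) ≠ 0 := by positivity
      have h2 : ((m:ℝ)+2) ≠ 0 := by positivity
      have h3 : ((m:ℝ)+3) ≠ 0 := by positivity
      have := fact_ne m
      push_cast
      field_simp
      try ring
      try tauto
    rcases Fin.eq_zero_or_eq_succ i with rfl | ⟨i', rfl⟩
    · rcases Fin.eq_zero_or_eq_succ j with rfl | ⟨j', rfl⟩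
      · exact absurd rfl hij
      · exact aux j'
    · rcases Fin.eq_zero_or_eq_succ j with rfl | ⟨j', rfl⟩
      · have hc : (fun x : Fin (m+1) → ℝ => x i'.succ * x 0)
            = fun x : Fin (m+1) → ℝ => x 0 * x i'.succ := funext fun x => mul_comm _ _
        show ∫ x in S (m+1) h, x i'.succ * x 0 = _
        rw [show (∫ x in S (m+1) h, x i'.succ * x 0)
            = ∫ x in S (m+1) h, x 0 * x i'.succ from by rw [hc]]
        exact aux i'
      · have hij' : i' ≠ j' := fun hc => hij (by rw [hc])
        rw [slice m h (by fun_prop : Continuous fun x : Fin (m+1) → ℝ => x i'.succ * x j'.succ)]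
        have e : Set.EqOn
            (fun t => ∫ y in S m (h - t), (Fin.cons t y : Fin (m+1) → ℝ) i'.succ * (Fin.cons t y : Fin (m+1) → ℝ) j'.succ)
            (fun t => (1 / (Nat.factorial (m+2) : ℝ)) * ((h - t)^(m+2))) (Set.Icc 0 h) := by
          intro t ht
          simp only [Fin.cons_succ]
          rw [IH (by linarith [ht.2] : (0:ℝ) ≤ h - t) hij']
          ring
        rw [MeasureTheory.setIntegral_congr_fun measurableSet_Icc e, icc_int hh,
          intervalIntegral.integral_const_mul, J0]
        rw [fact1 (m+2), fact1 (m+1), fact1 m]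
        have h1 : ((m:ℝ)+1) ≠ 0 := by positivity
        have h2 : ((m:ℝ)+2) ≠ 0 := by positivity
        have h3 : ((m:ℝ)+3) ≠ 0 := by positivity
        have := fact_ne m
        push_cast
        field_simp
        try ring
        try tauto

end SCS2

namespace SCS3
open SCS SCS2
local notation "S" => scaledCornerSimplex

lemma int_affine (m : ℕ) {h : ℝ} (hh : 0 ≤ h) (C : Fin m → ℝ) (K : ℝ) :
    ∫ x in S m h, (∑ i, C i * x i + K)
      = (∑ i, C i) * (h^(m+1) / (Nat.factorial (m+1) : ℝ))
        + K * (h^m / (Nat.factorial m : ℝ)) := by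
  have hcont : Continuous fun x : Fin m → ℝ => ∑ i, C i * x i := by
    apply continuous_finset_sum
    exact fun i _ => continuous_const.mul (continuous_apply i)
  rw [MeasureTheory.integral_add (integrableOn hcont) (integrableOn continuous_const)]
  rw [MeasureTheory.integral_finset_sum _ (f := fun (i : Fin m) (x : Fin m → ℝ) => C i * x i)
    (fun i _ => integrableOn (F := fun x : Fin m → ℝ => C i * x i) (continuous_const.mul (continuous_apply i)))]
  rw [MeasureTheory.setIntegral_const, smul_eq_mul, measureReal_def, volume_toReal m hh]
  have hterm : ∀ i : Fin m, ∫ x in S m h, C i * x i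
      = C i * (h^(m+1) / (Nat.factorial (m+1) : ℝ)) := fun i => by
    rw [MeasureTheory.integral_const_mul, int_coord m hh i]
  simp_rw [hterm]
  rw [← Finset.sum_mul]
  ring

lemma int_affine_sq (m : ℕ) {h : ℝ} (hh : 0 ≤ h) (C : Fin m → ℝ) (K : ℝ) :
    ∫ x in S m h, (∑ i, C i * x i + K)^2
      = ((∑ i, C i)^2 + ∑ i, (C i)^2) * (h^(m+2) / (Nat.factorial (m+2) : ℝ))
        + 2*K*(∑ i, C i) * (h^(m+1) / (Nat.factorial (m+1) : ℝ))
        + K^2 * (h^m / (Nat.factorial m : ℝ)) := by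
  have hexp : (fun x : Fin m → ℝ => (∑ i, C i * x i + K)^2)
      = fun x => (∑ i, ∑ j, (C i * C j) * (x i * x j))
          + ((∑ i, (2*K*C i) * x i) + K^2) := by
    funext x
    have h1 : (∑ i, C i * x i)^2 = ∑ i, ∑ j, (C i * C j) * (x i * x j) := by
      rw [sq, Finset.sum_mul_sum]
      exact Finset.sum_congr rfl fun i _ =>
        Finset.sum_congr rfl fun j _ => by ring
    have h2 : (2*K) * (∑ i, C i * x i) = ∑ i, (2*K*C i) * x i := by
      rw [Finset.mul_sum]
      exact Finset.sum_congr rfl fun i _ => by ring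
    calc (∑ i, C i * x i + K)^2
        = (∑ i, C i * x i)^2 + ((2*K) * (∑ i, C i * x i) + K^2) := by ring
      _ = _ := by rw [h1, h2]
  rw [hexp]
  have hc1 : Continuous fun x : Fin m → ℝ => ∑ i, ∑ j, (C i * C j) * (x i * x j) := by
    apply continuous_finset_sum; intro i _
    apply continuous_finset_sum; intro j _
    exact continuous_const.mul ((continuous_apply i).mul (continuous_apply j))
  have hc2 : Continuous fun x : Fin m → ℝ => ∑ i, (2*K*C i) * x i := by
    apply continuous_finset_sum; intro i _
    exact continuous_const.mul (continuous_apply i)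
  rw [MeasureTheory.integral_add (g := fun x => (∑ i, (2*K*C i) * x i) + K^2) (integrableOn hc1)
    (integrableOn (hc2.add continuous_const))]
  rw [MeasureTheory.integral_add (integrableOn hc2) (integrableOn continuous_const)]
  rw [MeasureTheory.integral_finset_sum _ (f := fun i x => ∑ j, (C i * C j) * (x i * x j)) (fun i _ => integrableOn (by
    apply continuous_finset_sum; intro j _
    exact continuous_const.mul ((continuous_apply i).mul (continuous_apply j))))]
  have hIJ : ∀ i : Fin m, ∫ x in S m h, ∑ j, (C i * C j) * (x i * x j)
      = ∑ j, (C i * C j) * (if i = j then 2*h^(m+2) / (Nat.factorial (m+2) : ℝ)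
          else h^(m+2) / (Nat.factorial (m+2) : ℝ)) := by
    intro i
    rw [MeasureTheory.integral_finset_sum _ (f := fun j x => (C i * C j) * (x i * x j)) (fun j _ => integrableOn
      (continuous_const.mul ((continuous_apply i).mul (continuous_apply j))))]
    refine Finset.sum_congr rfl fun j _ => ?_
    rw [MeasureTheory.integral_const_mul]
    by_cases hij : i = j
    · subst hij
      rw [if_pos rfl]
      congr 1
      have : (fun x : Fin m → ℝ => x i * x i) = fun x => (x i)^2 := by
        funext x; ring
      rw [show (∫ x in S m h, x i * x i) = ∫ x in S m h, (x i)^2 from by rw [this]]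
      exact int_sq m hh i
    · rw [if_neg hij, int_cross m hh hij]
  simp_rw [hIJ]
  have hlin : ∀ i : Fin m, ∫ x in S m h, (2*K*C i) * x i
      = (2*K*C i) * (h^(m+1) / (Nat.factorial (m+1) : ℝ)) := by
    intro i
    rw [MeasureTheory.integral_const_mul, int_coord m hh i]
  rw [MeasureTheory.integral_finset_sum _ (f := fun (i : Fin m) (x : Fin m → ℝ) => (2*K*C i) * x i)
    (fun i _ => integrableOn (F := fun x : Fin m → ℝ => (2*K*C i) * x i) (continuous_const.mul (continuous_apply i)))]
  simp_rw [hlin]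
  rw [MeasureTheory.setIntegral_const, smul_eq_mul, measureReal_def, volume_toReal m hh]
  -- now pure algebra over finite sums
  set Q := h^(m+2) / (Nat.factorial (m+2) : ℝ) with hQ
  have hsum : ∀ i : Fin m, ∑ j, (C i * C j) * (if i = j then 2*Q else Q)
      = (C i * ∑ j, C j) * Q + (C i)^2 * Q := by
    intro i
    have : ∀ j : Fin m, (C i * C j) * (if i = j then 2*Q else Q)
        = (C i * C j) * Q + (if i = j then (C i * C j) * Q else 0) := by
      intro j
      by_cases hij : i = j <;> simp [hij] <;> ring
    simp_rw [this]
    rw [Finset.sum_add_distrib, Finset.sum_ite_eq, if_pos (Finset.mem_univ i)]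
    have : ∑ j : Fin m, C i * C j * Q = (C i * ∑ j, C j) * Q := by
      rw [Finset.mul_sum, Finset.sum_mul]
    rw [this]; ring
  simp_rw [show (2:ℝ)*h^(m+2) / (Nat.factorial (m+2) : ℝ) = 2*Q from by rw [hQ]; ring]
  simp_rw [hsum]
  rw [Finset.sum_add_distrib]
  have e1 : ∑ i : Fin m, (C i * ∑ j, C j) * Q = (∑ i, C i)^2 * Q := by
    rw [← Finset.sum_mul, ← Finset.sum_mul, sq]
  have e2 : ∑ i : Fin m, (C i)^2 * Q = (∑ i, (C i)^2) * Q := by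
    rw [← Finset.sum_mul]
  have e3 : ∑ i : Fin m, 2*K*C i * (h^(m+1) / (Nat.factorial (m+1) : ℝ))
      = 2*K*(∑ i, C i) * (h^(m+1) / (Nat.factorial (m+1) : ℝ)) := by
    rw [← Finset.sum_mul, ← Finset.mul_sum]
  rw [e1, e2, e3]
  ring

end SCS3

namespace SCS4
open intervalIntegral

lemma riemann (a : ℝ → ℝ) (ha : Continuous a) :
    Tendsto (fun n : ℕ => (1/(n:ℝ)) * ∑ k ∈ Finset.Icc 1 n, a ((k:ℝ)/n)) atTop
      (nhds (∫ t in (0:ℝ)..1, a t)) := by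
  rw [Metric.tendsto_atTop]
  intro ε hε
  have hu : ∃ δ > 0, ∀ x ∈ Set.Icc (0:ℝ) 1, ∀ y ∈ Set.Icc (0:ℝ) 1,
      dist x y < δ → dist (a x) (a y) < ε/2 := by
    have hc : UniformContinuousOn a (Set.Icc (0:ℝ) 1) :=
      isCompact_Icc.uniformContinuousOn_of_continuous ha.continuousOn
    exact Metric.uniformContinuousOn_iff.1 hc (ε/2) (half_pos hε)
  obtain ⟨δ, hδ, hδ2⟩ := hu
  refine ⟨⌈1/δ⌉₊ + 1, fun n hn => ?_⟩
  have hn1 : 1 ≤ n := le_trans (Nat.le_add_left 1 _) hn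
  have hnR : (0:ℝ) < n := by exact_mod_cast hn1
  have hsmall : (1:ℝ)/n < δ := by
    have h1 : (1:ℝ)/δ < n := by
      calc (1:ℝ)/δ ≤ ⌈1/δ⌉₊ := Nat.le_ceil _
      _ < (⌈1/δ⌉₊ : ℝ) + 1 := by linarith
      _ ≤ n := by exact_mod_cast hn
    rw [div_lt_iff₀ hnR]
    rw [div_lt_iff₀ hδ] at h1
    linarith [mul_comm δ (n:ℝ)]
  -- rewrite the sum
  have hsum : ∑ k ∈ Finset.Icc 1 n, a ((k:ℝ)/n)
      = ∑ i ∈ Finset.range n, a (((1+i : ℕ):ℝ)/n) := by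
    have : Finset.Icc 1 n = Finset.Ico 1 (n+1) := by
      rw [Finset.Ico_add_one_right_eq_Icc]
    rw [this, Finset.sum_Ico_eq_sum_range]
    simp
  have haint : ∀ (u v : ℝ), IntervalIntegrable a volume u v :=
    fun u v => ha.intervalIntegrable u v
  have hsplit : ∫ t in (0:ℝ)..1, a t
      = ∑ i ∈ Finset.range n, ∫ t in ((i:ℝ)/n)..(((i:ℝ)+1)/n), a t := by
    have := intervalIntegral.sum_integral_adjacent_intervals
      (a := fun i : ℕ => (i:ℝ)/n) (μ := volume) (f := a) (n := n)
      (fun k _ => haint _ _)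
    rw [show ((0:ℕ):ℝ)/(n:ℝ) = 0 from by simp, div_self hnR.ne'] at this
    rw [← this]
    refine Finset.sum_congr rfl fun i _ => ?_
    norm_num
  set d : ℕ → ℝ := fun i => (1/(n:ℝ)) * a (((1+i : ℕ):ℝ)/n)
      - ∫ t in ((i:ℝ)/n)..(((i:ℝ)+1)/n), a t with hd
  have hdiff : (1/(n:ℝ)) * ∑ k ∈ Finset.Icc 1 n, a ((k:ℝ)/n) - ∫ t in (0:ℝ)..1, a t
      = ∑ i ∈ Finset.range n, d i := by
    rw [hsum, hsplit, Finset.mul_sum, ← Finset.sum_sub_distrib]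
  have hbound : ∀ i ∈ Finset.range n, ‖d i‖ ≤ (ε/2) * (1/n) := by
    intro i hi
    have hin : i < n := Finset.mem_range.1 hi
    have hin' : (i:ℝ) + 1 ≤ n := by exact_mod_cast hin
    have hle : (i:ℝ)/n ≤ ((i:ℝ)+1)/n := by
      gcongr
      linarith
    have hdi : d i = ∫ t in ((i:ℝ)/n)..(((i:ℝ)+1)/n), (a (((1+i : ℕ):ℝ)/n) - a t) := by
      rw [intervalIntegral.integral_sub (intervalIntegrable_const) (haint _ _),
        intervalIntegral.integral_const, smul_eq_mul]
      simp only [hd]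
      congr 2
      field_simp
      ring
    rw [hdi]
    have hC : ∀ t ∈ Set.uIoc ((i:ℝ)/n) (((i:ℝ)+1)/n), ‖a (((1+i : ℕ):ℝ)/n) - a t‖ ≤ ε/2 := by
      intro t ht
      rw [Set.uIoc_of_le hle] at ht
      have ht1 : (i:ℝ)/n < t := ht.1
      have ht2 : t ≤ ((i:ℝ)+1)/n := ht.2
      have hend : ((i:ℝ)+1)/n ≤ 1 := by
        rw [div_le_one hnR]; exact hin'
      have htIcc : t ∈ Set.Icc (0:ℝ) 1 :=
        ⟨le_trans (by positivity) ht1.le, le_trans ht2 hend⟩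
      have hcastp : ((1+i:ℕ):ℝ)/n = ((i:ℝ)+1)/n := by push_cast; ring_nf
      have hpIcc : ((1+i:ℕ):ℝ)/n ∈ Set.Icc (0:ℝ) 1 := by
        rw [hcastp]
        exact ⟨by positivity, hend⟩
      have hdist : dist (((1+i:ℕ):ℝ)/n) t < δ := by
        rw [hcastp, Real.dist_eq, abs_sub_lt_iff]
        constructor
        · have : ((i:ℝ)+1)/n - (i:ℝ)/n = 1/n := by field_simp; ring
          have h2 : ((i:ℝ)+1)/n - t < 1/n := by
            rw [← this]; linarith
          linarith
        · linarith [lt_of_lt_of_le ht1 ht2, div_pos (by norm_num : (0:ℝ) < 1) hnR, hδ]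
      rw [← dist_eq_norm]
      exact (hδ2 _ hpIcc _ htIcc hdist).le
    have hN := intervalIntegral.norm_integral_le_of_norm_le_const hC
    have habs : |((i:ℝ)+1)/n - (i:ℝ)/n| = 1/n := by
      have : ((i:ℝ)+1)/n - (i:ℝ)/n = 1/n := by field_simp; ring
      rw [this, abs_of_nonneg (by positivity)]
    rw [habs] at hN
    exact hN
  have hd2 : dist ((1/(n:ℝ)) * ∑ k ∈ Finset.Icc 1 n, a ((k:ℝ)/n))
      (∫ t in (0:ℝ)..1, a t) ≤ ε/2 := by
    rw [Real.dist_eq, hdiff, ← Real.norm_eq_abs]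
    calc ‖∑ i ∈ Finset.range n, d i‖ ≤ ∑ i ∈ Finset.range n, ‖d i‖ :=
        norm_sum_le (Finset.range n) d
      _ ≤ ∑ _i ∈ Finset.range n, (ε/2) * (1/(n:ℝ)) := Finset.sum_le_sum hbound
      _ = (n:ℝ) * ((ε/2)*(1/(n:ℝ))) := by
          rw [Finset.sum_const, Finset.card_range, nsmul_eq_mul]
      _ = ε/2 := by field_simp
  exact lt_of_le_of_lt hd2 (by linarith)

end SCS4


namespace SCS5
open SCS SCS2 SCS3 SCS4
local notation "S" => scaledCornerSimplex

lemma volume_ne_zero (m : ℕ) {h : ℝ} (hh : 0 < h) : volume (S m h) ≠ 0 := by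
  intro hc
  have h1 := volume_toReal m hh.le
  rw [hc] at h1
  simp only [ENNReal.toReal_zero] at h1
  have : 0 < h^m / (Nat.factorial m : ℝ) := by positivity
  rw [← h1] at this
  exact lt_irrefl _ this

lemma volume_ne_top (m : ℕ) (h : ℝ) : volume (S m h) ≠ ⊤ :=
  (SCS.volume_lt_top m h).ne

instance isProb (m : ℕ) (h : ℝ) [Fact (0 < h)] :
    IsProbabilityMeasure (scaledCornerSimplexUnif m h) := by
  constructor
  rw [scaledCornerSimplexUnif, Measure.smul_apply,
    Measure.restrict_apply MeasurableSet.univ, Set.univ_inter, smul_eq_mul]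
  exact ENNReal.inv_mul_cancel (volume_ne_zero m (Fact.out)) (volume_ne_top m h)

lemma contY (a : ℝ → ℝ) (ha : Continuous a) (s : ℝ) (n : ℕ) :
    Continuous (simplexYa a s n) := by
  apply continuous_const.mul
  apply Continuous.add
  · apply continuous_finset_sum
    exact fun i _ => continuous_const.mul (continuous_apply i)
  · apply continuous_const.mul
    apply Continuous.sub continuous_const
    apply continuous_finset_sum
    exact fun i _ => continuous_apply i

lemma memL2 (a : ℝ → ℝ) (ha : Continuous a) (s : ℝ) {n : ℕ} {hp : 0 < (n:ℝ) * s} :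
    MemLp (simplexYa a s n) 2 (scaledCornerSimplexUnif (n-1) ((n:ℝ)*s)) := by
  refine (memLp_two_iff_integrable_sq
    ((contY a ha s n).aestronglyMeasurable)).2 ?_
  rw [scaledCornerSimplexUnif]
  apply MeasureTheory.Integrable.smul_measure _ (by
    simp only [ne_eq, ENNReal.inv_eq_top]
    exact volume_ne_zero _ hp)
  exact integrableOn (((contY a ha s n)).pow 2)

end SCS5

namespace SCS6
open SCS SCS2 SCS3 SCS4 SCS5
local notation "S" => scaledCornerSimplex

lemma key (s : ℝ) (hs : 0 < s) (a : ℝ → ℝ) (n : ℕ) (hn : 3 ≤ n) :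
    (∫ x, simplexYa a s n x ∂(scaledCornerSimplexUnif (n - 1) (n * s))) =
      (s / n) * ∑ k ∈ Finset.Icc 1 n, a ((k : ℝ) / n) ∧
    (∫ x, (simplexYa a s n x) ^ 2 ∂(scaledCornerSimplexUnif (n - 1) (n * s))) =
      (s ^ 2 / ((n : ℝ) * (n + 1))) *
        ((∑ k ∈ Finset.Icc 1 n, a ((k : ℝ) / n)) ^ 2 +
          ∑ k ∈ Finset.Icc 1 n, a ((k : ℝ) / n) ^ 2) := by
  have hn0 : (0:ℝ) < n := by exact_mod_cast (by omega : 0 < n)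
  set m : ℕ := n - 1 with hm
  have hmn : m + 1 = n := by omega
  set N : ℝ := (n:ℝ) with hNdef
  have hNm : (m:ℝ) = N - 1 := by
    rw [hNdef, ← hmn]
    push_cast
    ring
  have hNne : N ≠ 0 := ne_of_gt hn0
  set h : ℝ := N * s with hhdef
  have hh : 0 < h := mul_pos hn0 hs
  set b : ℝ := a (N/N) with hb
  set A : Fin m → ℝ := fun i => a (((i:ℕ) + 1 : ℝ)/N) with hA
  set C : Fin m → ℝ := fun i => A i - b with hC
  set K : ℝ := b * h with hK
  have hYx : ∀ x : Fin m → ℝ, simplexYa a s n x = (1/N) * ((∑ i, C i * x i) + K) := by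
    intro x
    rw [simplexYa]
    have e : ∑ i, C i * x i = (∑ i, A i * x i) - b * ∑ i, x i := by
      rw [Finset.mul_sum, ← Finset.sum_sub_distrib]
      refine Finset.sum_congr rfl fun i _ => ?_
      rw [hC]
      ring
    rw [e, hK, hhdef]
    ring
  set V : ℝ := h^m / (Nat.factorial m : ℝ) with hV
  have hVpos : 0 < V := by
    rw [hV]
    positivity
  have hVne : V ≠ 0 := ne_of_gt hVpos
  have hμ : ∀ f : (Fin m → ℝ) → ℝ, (∫ x, f x ∂(scaledCornerSimplexUnif m h))
      = V⁻¹ * ∫ x in S m h, f x := by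
    intro f
    rw [scaledCornerSimplexUnif, MeasureTheory.integral_smul_measure, smul_eq_mul,
      ENNReal.toReal_inv, volume_toReal m hh.le, hV]
  have hI1 : h^(m+1) / (Nat.factorial (m+1) : ℝ) = s * V := by
    rw [hV, fact1 m, pow_succ, hhdef, hNm]
    have h1 : (N - 1) + 1 = N := by ring
    rw [h1]
    have hfne := fact_ne m
    field_simp
  have hJ : h^(m+2) / (Nat.factorial (m+2) : ℝ) = (N * s^2/(N+1)) * V := by
    rw [hV, fact1 (m+1), fact1 m, hNm]
    have h1 : (N - 1) + 1 = N := by ring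
    have h2 : ((m:ℝ) + 1) + 1 = N + 1 := by rw [hNm]; ring
    have hNp1 : N + 1 ≠ 0 := by positivity
    have hfne := fact_ne m
    push_cast
    rw [hNm, h1]
    have hpow : h^(m+2) = h^m * h^2 := by ring
    rw [hpow, hhdef]
    field_simp
  -- sums over Icc
  have hT : ∑ k ∈ Finset.Icc 1 n, a ((k : ℝ) / N) = (∑ i, A i) + b := by
    rw [← hmn, Finset.sum_Icc_succ_top (by omega : 1 ≤ m + 1)]
    congr 1
    · have hIco : Finset.Icc 1 m = Finset.Ico 1 (m+1) := by rw [Finset.Ico_add_one_right_eq_Icc]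
      rw [hIco, Finset.sum_Ico_eq_sum_range]
      simp only [Nat.add_sub_cancel]
      rw [Fin.sum_univ_eq_sum_range (fun i => a (((i:ℕ) + 1 : ℝ)/N)) m]
      refine Finset.sum_congr rfl fun i _ => ?_
      push_cast
      ring_nf
    · have hcast : ((m+1:ℕ):ℝ) = N := by push_cast; rw [hNm]; ring
      rw [hcast]
  have hQ : ∑ k ∈ Finset.Icc 1 n, a ((k : ℝ) / N)^2 = (∑ i, (A i)^2) + b^2 := by
    rw [← hmn, Finset.sum_Icc_succ_top (by omega : 1 ≤ m + 1)]
    congr 1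
    · have hIco : Finset.Icc 1 m = Finset.Ico 1 (m+1) := by rw [Finset.Ico_add_one_right_eq_Icc]
      rw [hIco, Finset.sum_Ico_eq_sum_range]
      simp only [Nat.add_sub_cancel]
      rw [Fin.sum_univ_eq_sum_range (fun i => (a (((i:ℕ) + 1 : ℝ)/N))^2) m]
      refine Finset.sum_congr rfl fun i _ => ?_
      push_cast
      ring_nf
    · have hcast : ((m+1:ℕ):ℝ) = N := by push_cast; rw [hNm]; ring
      rw [hcast]
  have hsumC : ∑ i, C i = (∑ i, A i) - (N - 1) * b := by
    rw [hC]
    rw [Finset.sum_sub_distrib, Finset.sum_const, Finset.card_univ, Fintype.card_fin,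
      nsmul_eq_mul, hNm]
  have hsumC2 : ∑ i, (C i)^2 = (∑ i, (A i)^2) - 2*b*(∑ i, A i) + (N - 1) * b^2 := by
    have e : ∀ i : Fin m, (C i)^2 = ((A i)^2 - 2*b*(A i)) + b^2 := by
      intro i
      rw [hC]
      ring
    simp_rw [e]
    rw [Finset.sum_add_distrib, Finset.sum_sub_distrib, Finset.sum_const, Finset.card_univ,
      Fintype.card_fin, nsmul_eq_mul, hNm, ← Finset.mul_sum]
  have hNp1 : N + 1 ≠ 0 := by positivity
  constructor
  · rw [hμ (simplexYa a s n)]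
    have e1 : ∫ x in S m h, simplexYa a s n x
        = (1/N) * ((∑ i, C i) * (h^(m+1) / (Nat.factorial (m+1) : ℝ))
            + K * (h^m / (Nat.factorial m : ℝ))) := by
      simp_rw [hYx]
      rw [MeasureTheory.integral_const_mul, int_affine m hh.le C K]
    rw [e1, hI1, ← hV, hT, hsumC, hK, hhdef]
    field_simp
    ring
  · rw [hμ (fun x => (simplexYa a s n x)^2)]
    have e2 : ∫ x in S m h, (simplexYa a s n x)^2
        = (1/N)^2 * (((∑ i, C i)^2 + ∑ i, (C i)^2) * (h^(m+2) / (Nat.factorial (m+2) : ℝ))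
            + 2*K*(∑ i, C i) * (h^(m+1) / (Nat.factorial (m+1) : ℝ))
            + K^2 * (h^m / (Nat.factorial m : ℝ))) := by
      have e : (fun x : Fin m → ℝ => (simplexYa a s n x)^2)
          = fun x => (1/N)^2 * ((∑ i, C i * x i) + K)^2 := by
        funext x
        rw [hYx x]
        ring
      rw [show (∫ x in S m h, (simplexYa a s n x)^2)
          = ∫ x in S m h, (1/N)^2 * ((∑ i, C i * x i) + K)^2 from by rw [← e]]
      rw [MeasureTheory.integral_const_mul, int_affine_sq m hh.le C K]
    rw [e2, hI1, hJ, ← hV, hT, hQ, hsumC, hsumC2, hK, hhdef]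
    field_simp
    ring

end SCS6


/-- Theorem 6.1: with `(x₁,…,x_{n-1})` uniform on `Δ_{ns}`,
`x_n = ns - ∑_{i<n} x_i`, `a` continuous, `a_k = a(k/n)` and
`Y n = (1/n) ∑_{k=1}^n a_k x_k`: `E[Y n] = (s/n) ∑ a_k`,
`E[Y n ^ 2] = (s²/(n(n+1)))((∑ a_k)² + ∑ a_k²)`, hence
`E[Y n] → s ∫_0^1 a`, `E[Y n ^ 2] → (s ∫_0^1 a)²` and `Var (Y n) → 0`. -/
theorem stmt12 (s : ℝ) (hs : 0 < s) (a : ℝ → ℝ) (ha : Continuous a) :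
    (∀ n : ℕ, 3 ≤ n →
      (∫ x, simplexYa a s n x ∂(scaledCornerSimplexUnif (n - 1) (n * s))) =
        (s / n) * ∑ k ∈ Finset.Icc 1 n, a ((k : ℝ) / n) ∧
      (∫ x, (simplexYa a s n x) ^ 2 ∂(scaledCornerSimplexUnif (n - 1) (n * s))) =
        (s ^ 2 / ((n : ℝ) * (n + 1))) *
          ((∑ k ∈ Finset.Icc 1 n, a ((k : ℝ) / n)) ^ 2 +
            ∑ k ∈ Finset.Icc 1 n, a ((k : ℝ) / n) ^ 2)) ∧
    Tendsto
      (fun n : ℕ => ∫ x, simplexYa a s n x ∂(scaledCornerSimplexUnif (n - 1) (n * s)))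
      atTop (nhds (s * ∫ t in (0:ℝ)..1, a t)) ∧
    Tendsto
      (fun n : ℕ =>
        ∫ x, (simplexYa a s n x) ^ 2 ∂(scaledCornerSimplexUnif (n - 1) (n * s)))
      atTop (nhds ((s * ∫ t in (0:ℝ)..1, a t) ^ 2)) ∧
    Tendsto
      (fun n : ℕ => variance (simplexYa a s n) (scaledCornerSimplexUnif (n - 1) (n * s)))
      atTop (nhds 0) := by
  have hkey := fun (n : ℕ) (hn : 3 ≤ n) => SCS6.key s hs a n hn
  have riem1 := SCS4.riemann a ha
  have riem2 := SCS4.riemann (fun t => (a t)^2) (ha.pow 2)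
  have P1 : Tendsto
      (fun n : ℕ => ∫ x, simplexYa a s n x ∂(scaledCornerSimplexUnif (n - 1) (n * s)))
      atTop (nhds (s * ∫ t in (0:ℝ)..1, a t)) := by
    refine Tendsto.congr' ?_ (riem1.const_mul s)
    filter_upwards [eventually_ge_atTop 3] with n hn
    rw [(hkey n hn).1]
    ring
  have h1n : Tendsto (fun n : ℕ => 1/((n:ℝ)+1)) atTop (nhds 0) :=
    tendsto_one_div_add_atTop_nhds_zero_nat
  have hnn1 : Tendsto (fun n : ℕ => (n:ℝ)/((n:ℝ)+1)) atTop (nhds 1) := by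
    have e : ∀ n : ℕ, (n:ℝ)/((n:ℝ)+1) = 1 - 1/((n:ℝ)+1) := by
      intro n
      have hne : ((n:ℝ)+1) ≠ 0 := by positivity
      field_simp
      ring
    simp_rw [e]
    simpa using (tendsto_const_nhds (x := (1:ℝ)) (f := atTop)).sub h1n
  have P2 : Tendsto
      (fun n : ℕ => ∫ x, (simplexYa a s n x) ^ 2 ∂(scaledCornerSimplexUnif (n - 1) (n * s)))
      atTop (nhds ((s * ∫ t in (0:ℝ)..1, a t) ^ 2)) := by
    have base : Tendsto (fun n : ℕ =>
        s^2 * ((n:ℝ)/((n:ℝ)+1)) * ((1/(n:ℝ)) * ∑ k ∈ Finset.Icc 1 n, a ((k:ℝ)/n))^2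
          + s^2 * (1/((n:ℝ)+1)) * ((1/(n:ℝ)) * ∑ k ∈ Finset.Icc 1 n, a ((k:ℝ)/n)^2))
        atTop (nhds (s^2 * 1 * (∫ t in (0:ℝ)..1, a t)^2
          + s^2 * 0 * (∫ t in (0:ℝ)..1, a t ^ 2))) := by
      exact ((hnn1.const_mul (s^2)).mul (riem1.pow 2)).add ((h1n.const_mul (s^2)).mul riem2)
    have elim : s^2 * 1 * (∫ t in (0:ℝ)..1, a t)^2 + s^2 * 0 * (∫ t in (0:ℝ)..1, a t ^ 2)
        = (s * ∫ t in (0:ℝ)..1, a t)^2 := by ring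
    rw [elim] at base
    refine Tendsto.congr' ?_ base
    filter_upwards [eventually_ge_atTop 3] with n hn
    rw [(hkey n hn).2]
    have hn0 : (n:ℝ) ≠ 0 := by
      have : (0:ℝ) < n := by exact_mod_cast (by omega : 0 < n)
      exact ne_of_gt this
    have hn1 : ((n:ℝ)+1) ≠ 0 := by positivity
    field_simp
  refine ⟨hkey, P1, P2, ?_⟩
  have hsub := P2.sub (P1.pow 2)
  rw [sub_self] at hsub
  refine Tendsto.congr' ?_ hsub
  filter_upwards [eventually_ge_atTop 3] with n hn
  have hp : 0 < (n:ℝ) * s := by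
    have : (0:ℝ) < n := by exact_mod_cast (by omega : 0 < n)
    exact mul_pos this hs
  haveI : Fact (0 < (n:ℝ) * s) := ⟨hp⟩
  haveI := SCS5.isProb (n-1) ((n:ℝ)*s)
  have hmem := SCS5.memL2 a ha s (n := n) (hp := hp)
  rw [ProbabilityTheory.variance_eq_sub hmem]
  simp only [Pi.pow_apply]
end

section
/- Let n ≥ 1 be an integer and p₁,…,p_n > 0 real numbers. Let B⁺ = {x ∈ ℝ^n : x₁² + ⋯ + x_n² ≤ 1 and x_k > 0 for k = 1,…,n}. Then ∫_{B⁺} x₁^{p₁−1}·x₂^{p₂−1}⋯x_n^{p_n−1} dx₁⋯dx_n = (1/2^n)·( Γ(p₁/2)·Γ(p₂/2)⋯Γ(p_n/2) ) / Γ(1 + (p₁+⋯+p_n)/2). -/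
open MeasureTheory Real Set Filter

private lemma aux_rpow_sum {r : ℝ} (hr : 0 < r) {ι : Type*} (s : Finset ι) (q : ι → ℝ) :
    ∏ i ∈ s, r ^ q i = r ^ (∑ i ∈ s, q i) := by
  induction s using Finset.cons_induction with
  | empty => simp
  | cons a s ha ih => rw [Finset.prod_cons, Finset.sum_cons, ih, ← Real.rpow_add hr]

private lemma aux_deriv (r : ℝ) :
    HasDerivAt (fun t : ℝ => -Real.exp (-t ^ 2)) (2 * r * Real.exp (-r ^ 2)) r := by
  have h : HasDerivAt (fun t : ℝ => -t ^ 2) (-(2 * r)) r := by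
    simpa using (hasDerivAt_pow 2 r).fun_neg
  have := (Real.hasDerivAt_exp (-r ^ 2)).comp r h
  refine this.fun_neg.congr_deriv ?_
  ring

private lemma aux_tendsto :
    Tendsto (fun t : ℝ => -Real.exp (-t ^ 2)) atTop (nhds 0) := by
  have h1 : Tendsto (fun t : ℝ => -t ^ 2) atTop atBot :=
    tendsto_neg_atBot_iff.mpr (tendsto_pow_atTop two_ne_zero)
  simpa using (Real.tendsto_exp_atBot.comp h1).neg

private lemma aux_int_Ioi {a : ℝ} (ha : 0 ≤ a) :
    IntegrableOn (fun r : ℝ => 2 * r * Real.exp (-r ^ 2)) (Ioi a) ∧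
      ∫ r in Ioi a, 2 * r * Real.exp (-r ^ 2) = Real.exp (-a ^ 2) := by
  have hderiv : ∀ x ∈ Ici a, HasDerivAt (fun t : ℝ => -Real.exp (-t ^ 2))
      (2 * x * Real.exp (-x ^ 2)) x := fun x _ => aux_deriv x
  have hpos : ∀ x ∈ Ioi a, 0 ≤ 2 * x * Real.exp (-x ^ 2) := by
    intro x hx
    have : (0:ℝ) < x := lt_of_le_of_lt ha hx
    positivity
  refine ⟨integrableOn_Ioi_deriv_of_nonneg' hderiv hpos aux_tendsto, ?_⟩
  have := integral_Ioi_of_hasDerivAt_of_nonneg' hderiv hpos aux_tendsto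
  simpa using this

private lemma aux_layer {t : ℝ} (ht : 0 ≤ t) :
    ∫⁻ r in Ioi (0:ℝ), ({q : ℝ | t ≤ q ^ 2}.indicator
        (fun r => ENNReal.ofReal (2 * r * Real.exp (-r ^ 2)))) r
      = ENNReal.ofReal (Real.exp (-t)) := by
  have hSm : MeasurableSet {q : ℝ | t ≤ q ^ 2} :=
    measurableSet_le measurable_const (by fun_prop)
  rw [lintegral_indicator hSm, Measure.restrict_restrict hSm]
  have hae : ({q : ℝ | t ≤ q ^ 2} ∩ Ioi 0 : Set ℝ) =ᶠ[ae volume] Ioi (Real.sqrt t) := by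
    rw [MeasureTheory.ae_eq_set]
    constructor
    · refine measure_mono_null ?_ (measure_singleton (Real.sqrt t))
      intro r hr
      obtain ⟨⟨h1, h2⟩, h3⟩ := hr
      simp only [mem_setOf_eq, mem_Ioi, not_lt] at h1 h2 h3 ⊢
      have h4 : Real.sqrt t ≤ r := by
        have := Real.sqrt_le_sqrt h1
        rwa [Real.sqrt_sq h2.le] at this
      simp [le_antisymm h3 h4]
    · have : Ioi (Real.sqrt t) \ ({q : ℝ | t ≤ q ^ 2} ∩ Ioi 0) = ∅ := by
        rw [diff_eq_empty]
        intro r hr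
        simp only [mem_Ioi] at hr
        have hr0 : 0 < r := lt_of_le_of_lt (Real.sqrt_nonneg t) hr
        refine ⟨?_, hr0⟩
        have := pow_le_pow_left₀ (Real.sqrt_nonneg t) hr.le 2
        rwa [Real.sq_sqrt ht] at this
      rw [this]
      exact measure_empty
  rw [Measure.restrict_congr_set hae]
  rw [← ofReal_integral_eq_lintegral_ofReal (aux_int_Ioi (Real.sqrt_nonneg t)).1
    (ae_restrict_of_forall_mem measurableSet_Ioi fun r hr => by
      have : (0:ℝ) < r := lt_of_le_of_lt (Real.sqrt_nonneg t) hr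
      positivity)]
  rw [(aux_int_Ioi (Real.sqrt_nonneg t)).2, Real.sq_sqrt ht]

private lemma aux_gamma_int {q : ℝ} (hq : -1 < q) :
    IntegrableOn (fun x : ℝ => x ^ q * Real.exp (-x ^ 2)) (Ioi 0) ∧
      ∫ x in Ioi (0:ℝ), x ^ q * Real.exp (-x ^ 2) = (1 / 2) * Real.Gamma ((q + 1) / 2) := by
  have hcast : ∀ x : ℝ, x ^ (2:ℝ) = x ^ 2 := fun x => by
    rw [show (2:ℝ) = ((2:ℕ):ℝ) by norm_num, Real.rpow_natCast]
  have h1 := integrableOn_rpow_mul_exp_neg_rpow hq two_pos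
  have h2 := integral_rpow_mul_exp_neg_rpow two_pos hq
  simp_rw [hcast] at h1 h2
  exact ⟨h1, h2⟩

/-- generalized Dirichlet formula, Lemma 8.1:
`∫_{B⁺} x₁^{p₁-1} ⋯ x_n^{p_n-1} dx = (1/2ⁿ) Γ(p₁/2)⋯Γ(p_n/2) / Γ(1 + (p₁+⋯+p_n)/2)`,
where `B⁺` is the positive part of the closed unit Euclidean ball in `ℝⁿ`. -/
theorem stmt13 (n : ℕ) (hn : 1 ≤ n) (p : Fin n → ℝ) (hp : ∀ i, 0 < p i)
    (Bplus : Set (Fin n → ℝ))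
    (hB : Bplus = {x | (∑ i, (x i) ^ 2 ≤ 1) ∧ ∀ k, 0 < x k}) :
    (∫ x in Bplus, ∏ i, (x i) ^ (p i - 1)) =
      (1 / 2 ^ n) * (∏ i, Real.Gamma (p i / 2)) /
        Real.Gamma (1 + (∑ i, p i) / 2) := by
  have hnE : Nonempty (Fin n) := ⟨⟨0, hn⟩⟩
  set s : ℝ := ∑ i, p i with hs
  have hs0 : 0 < s := Finset.sum_pos (fun i _ => hp i) Finset.univ_nonempty
  set f : (Fin n → ℝ) → ℝ := fun x => ∏ i, (x i) ^ (p i - 1) with hf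
  set F : (Fin n → ℝ) → ENNReal := fun x => ENNReal.ofReal (f x) with hF
  set P : Set (Fin n → ℝ) := {x | ∀ k, 0 < x k} with hP
  set A : ℝ → Set (Fin n → ℝ) := fun r => {x | ∑ i, (x i) ^ 2 ≤ r ^ 2} ∩ P with hA
  have hfm : Measurable f := Finset.measurable_prod _ fun i _ => by fun_prop
  have hFm : Measurable F := hfm.ennreal_ofReal
  have hPm : MeasurableSet P := by
    have : P = ⋂ k, {x : Fin n → ℝ | 0 < x k} := by ext x; simp [hP]
    rw [this]
    exact MeasurableSet.iInter fun k =>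
      measurableSet_lt measurable_const (measurable_pi_apply k)
  have hsum_m : Measurable fun x : Fin n → ℝ => ∑ i, (x i) ^ 2 := by fun_prop
  have hAm : ∀ r : ℝ, MeasurableSet (A r) := fun r =>
    (measurableSet_le hsum_m measurable_const).inter hPm
  -- scaling
  have hmem : ∀ (r : ℝ), 0 < r → ∀ x : Fin n → ℝ, (r • x ∈ A r ↔ x ∈ A 1) := by
    intro r hr x
    simp only [hA, Set.mem_inter_iff, Set.mem_setOf_eq, hP, Pi.smul_apply, smul_eq_mul,
      mul_pow, ← Finset.mul_sum, one_pow]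
    constructor
    · rintro ⟨h1, h2⟩
      refine ⟨?_, fun k => ?_⟩
      · exact le_of_mul_le_mul_left (by linarith) (pow_pos hr 2)
      · nlinarith [h2 k]
    · rintro ⟨h1, h2⟩
      exact ⟨by nlinarith [sq_nonneg r], fun k => mul_pos hr (h2 k)⟩
  have hfscale : ∀ (r : ℝ), 0 < r → ∀ x : Fin n → ℝ, x ∈ A 1 →
      f (r • x) = r ^ (s - (n : ℝ)) * f x := by
    intro r hr x hx
    have hxi : ∀ i, 0 ≤ x i := fun i => (hx.2 i).le
    simp only [hf, Pi.smul_apply, smul_eq_mul]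
    calc ∏ i, (r * x i) ^ (p i - 1)
        = ∏ i, (r ^ (p i - 1) * (x i) ^ (p i - 1)) :=
          Finset.prod_congr rfl fun i _ => Real.mul_rpow hr.le (hxi i)
      _ = (∏ i, r ^ (p i - 1)) * ∏ i, (x i) ^ (p i - 1) := Finset.prod_mul_distrib
      _ = r ^ (s - (n : ℝ)) * ∏ i, (x i) ^ (p i - 1) := by
          rw [aux_rpow_sum hr]
          congr 2
          rw [Finset.sum_sub_distrib, Finset.sum_const, Finset.card_univ, Fintype.card_fin]
          simp [hs]
  have hscale : ∀ (r : ℝ), 0 < r →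
      ∫⁻ x in A r, F x = ENNReal.ofReal (r ^ s) * ∫⁻ x in A 1, F x := by
    intro r hr
    have hrn : (0:ℝ) < r ^ n := pow_pos hr n
    have hmap : ∀ g : (Fin n → ℝ) → ENNReal, Measurable g →
        ∫⁻ x, g (r • x) = ENNReal.ofReal ((r ^ n)⁻¹) * ∫⁻ x, g x := by
      intro g hg
      rw [← MeasureTheory.lintegral_map hg (measurable_const_smul r),
        MeasureTheory.Measure.map_addHaar_smul volume hr.ne', lintegral_smul_measure]
      congr 2
      rw [Module.finrank_fintype_fun_eq_card, Fintype.card_fin, abs_of_nonneg (by positivity)]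
    have hpt : ∀ x : Fin n → ℝ, (A r).indicator F (r • x)
        = (A 1).indicator (fun y => ENNReal.ofReal (r ^ (s - (n : ℝ))) * F y) x := by
      intro x
      by_cases hx : x ∈ A 1
      · rw [Set.indicator_of_mem ((hmem r hr x).mpr hx), Set.indicator_of_mem hx]
        rw [hF]
        simp only
        rw [hfscale r hr x hx, ENNReal.ofReal_mul (by positivity)]
      · rw [Set.indicator_of_notMem (fun h => hx ((hmem r hr x).mp h)),
          Set.indicator_of_notMem hx]
    calc ∫⁻ x in A r, F x = ∫⁻ x, (A r).indicator F x := (lintegral_indicator (hAm r) F).symm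
      _ = ENNReal.ofReal (r ^ n) * ∫⁻ x, (A r).indicator F (r • x) := by
          rw [hmap _ (hFm.indicator (hAm r)), ← mul_assoc, ← ENNReal.ofReal_mul hrn.le,
            mul_inv_cancel₀ hrn.ne', ENNReal.ofReal_one, one_mul]
      _ = ENNReal.ofReal (r ^ n) *
          ∫⁻ x, (A 1).indicator (fun y => ENNReal.ofReal (r ^ (s - (n : ℝ))) * F y) x := by
          simp_rw [hpt]
      _ = ENNReal.ofReal (r ^ n) *
          (ENNReal.ofReal (r ^ (s - (n : ℝ))) * ∫⁻ x in A 1, F x) := by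
          rw [lintegral_indicator (hAm 1), lintegral_const_mul' _ _ ENNReal.ofReal_ne_top]
      _ = ENNReal.ofReal (r ^ s) * ∫⁻ x in A 1, F x := by
          rw [← mul_assoc, ← ENNReal.ofReal_mul (by positivity)]
          congr 2
          rw [← Real.rpow_natCast r n, ← Real.rpow_add hr]
          congr 1
          ring
  -- Gaussian integral over positive orthant
  set c : ℝ → ENNReal := fun r => ENNReal.ofReal (2 * r * Real.exp (-r ^ 2)) with hc
  have hcm : Measurable c := Measurable.ennreal_ofReal (by fun_prop)
  set h : (Fin n → ℝ) → ℝ := fun x => f x * Real.exp (-∑ i, (x i) ^ 2) with hh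
  have hexp : ∀ x : Fin n → ℝ, Real.exp (-∑ i, (x i) ^ 2) = ∏ i, Real.exp (-(x i) ^ 2) := by
    intro x
    rw [← Real.exp_sum]
    congr 1
    rw [← Finset.sum_neg_distrib]
  have hG1 : ∫⁻ x in P, ENNReal.ofReal (h x)
      = ENNReal.ofReal (∏ i, ((1 / 2) * Real.Gamma (p i / 2))) := by
    set g : Fin n → ℝ → ℝ :=
      fun i => (Ioi (0:ℝ)).indicator (fun t => t ^ (p i - 1) * Real.exp (-t ^ 2)) with hg
    have hpi : ∀ i, (-1:ℝ) < p i - 1 := fun i => by linarith [hp i]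
    have hgi : ∀ i, Integrable (g i) :=
      fun i => (integrable_indicator_iff measurableSet_Ioi).2 (aux_gamma_int (hpi i)).1
    have hgval : ∀ i, ∫ t, g i t = (1 / 2) * Real.Gamma (p i / 2) := by
      intro i
      rw [hg]
      simp only
      rw [integral_indicator measurableSet_Ioi, (aux_gamma_int (hpi i)).2]
      norm_num
    have hprod_ind : ∀ x : Fin n → ℝ, ∏ i, g i (x i) = P.indicator h x := by
      intro x
      by_cases hx : x ∈ P
      · rw [Set.indicator_of_mem hx]
        have hgx : ∀ i, g i (x i) = (x i) ^ (p i - 1) * Real.exp (-(x i) ^ 2) :=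
          fun i => Set.indicator_of_mem (hx i) _
        rw [Finset.prod_congr rfl (fun i _ => hgx i), Finset.prod_mul_distrib, ← hexp x]
      · rw [Set.indicator_of_notMem hx]
        have : ∃ k, ¬ (0 < x k) := by
          by_contra hcon
          push_neg at hcon
          exact hx hcon
        obtain ⟨k, hk⟩ := this
        apply Finset.prod_eq_zero (Finset.mem_univ k)
        exact Set.indicator_of_notMem hk _
    have hHi : Integrable (P.indicator h) := by
      have := MeasureTheory.Integrable.fintype_prod (𝕜 := ℝ) (f := g) hgi
      rwa [show (fun x : Fin n → ℝ => ∏ i, g i (x i)) = P.indicator h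
        from funext hprod_ind] at this
    rw [← ofReal_integral_eq_lintegral_ofReal ((integrable_indicator_iff hPm).1 hHi)
      (ae_restrict_of_forall_mem hPm fun x hx => mul_nonneg
        (Finset.prod_nonneg fun i _ => Real.rpow_nonneg (hx i).le _) (Real.exp_nonneg _))]
    congr 1
    rw [← integral_indicator hPm,
      show P.indicator h = fun x : Fin n → ℝ => ∏ i, g i (x i) from (funext hprod_ind).symm,
      MeasureTheory.volume_pi, MeasureTheory.integral_fintype_prod_eq_prod g]
    exact Finset.prod_congr rfl fun i _ => hgval i
  -- layered representation
  have hk : ∀ x ∈ P, ENNReal.ofReal (h x)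
      = ∫⁻ r in Ioi (0:ℝ), F x * ({q : ℝ | ∑ i, (x i) ^ 2 ≤ q ^ 2}.indicator c r) := by
    intro x hx
    rw [lintegral_const_mul' (F x) _ ENNReal.ofReal_ne_top, aux_layer (by positivity)]
    rw [hh]
    simp only
    rw [ENNReal.ofReal_mul (Finset.prod_nonneg fun i _ => Real.rpow_nonneg (hx i).le _)]
  have hinner : ∀ r : ℝ, ∫⁻ x in P, F x * ({q : ℝ | ∑ i, (x i) ^ 2 ≤ q ^ 2}.indicator c r)
      = (∫⁻ x in A r, F x) * c r := by
    intro r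
    have hpt2 : ∀ x : Fin n → ℝ, F x * ({q : ℝ | ∑ i, (x i) ^ 2 ≤ q ^ 2}.indicator c r)
        = ({x : Fin n → ℝ | ∑ i, (x i) ^ 2 ≤ r ^ 2}.indicator (fun x => F x * c r)) x := by
      intro x
      simp only [Set.indicator_apply, Set.mem_setOf_eq]
      by_cases hx : ∑ i, (x i) ^ 2 ≤ r ^ 2 <;> simp [hx]
    simp_rw [hpt2]
    rw [lintegral_indicator (measurableSet_le hsum_m measurable_const),
      Measure.restrict_restrict (measurableSet_le hsum_m measurable_const),
      lintegral_mul_const' _ _ ENNReal.ofReal_ne_top]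
  have hswap : ∫⁻ x in P, ENNReal.ofReal (h x)
      = ∫⁻ r in Ioi (0:ℝ), (∫⁻ x in A r, F x) * c r := by
    calc ∫⁻ x in P, ENNReal.ofReal (h x)
        = ∫⁻ x in P, ∫⁻ r in Ioi (0:ℝ),
            F x * ({q : ℝ | ∑ i, (x i) ^ 2 ≤ q ^ 2}.indicator c r) :=
          setLIntegral_congr_fun hPm hk
      _ = ∫⁻ r in Ioi (0:ℝ), ∫⁻ x in P,
            F x * ({q : ℝ | ∑ i, (x i) ^ 2 ≤ q ^ 2}.indicator c r) := by
          apply lintegral_lintegral_swap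
          have hD : MeasurableSet {z : (Fin n → ℝ) × ℝ | ∑ i, (z.1 i) ^ 2 ≤ z.2 ^ 2} :=
            measurableSet_le (hsum_m.comp measurable_fst) (by fun_prop)
          have heq : (Function.uncurry fun (x : Fin n → ℝ) (r : ℝ) =>
              F x * ({q : ℝ | ∑ i, (x i) ^ 2 ≤ q ^ 2}.indicator c r))
              = fun z : (Fin n → ℝ) × ℝ => (F z.1 * c z.2) *
                ({z : (Fin n → ℝ) × ℝ | ∑ i, (z.1 i) ^ 2 ≤ z.2 ^ 2}.indicator 1 z) := by
            funext z
            simp only [Function.uncurry, Set.indicator_apply, Set.mem_setOf_eq]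
            by_cases hz : ∑ i, (z.1 i) ^ 2 ≤ z.2 ^ 2 <;> simp [hz]
          rw [heq]
          exact (((hFm.comp measurable_fst).mul (hcm.comp measurable_snd)).mul
            (measurable_const.indicator hD)).aemeasurable
      _ = ∫⁻ r in Ioi (0:ℝ), (∫⁻ x in A r, F x) * c r := by
          exact lintegral_congr fun r => hinner r
  have hgamma2 : ∫⁻ r in Ioi (0:ℝ), ENNReal.ofReal (r ^ s) * c r
      = ENNReal.ofReal (Real.Gamma (1 + s / 2)) := by
    have h1 : ∀ r ∈ Ioi (0:ℝ), ENNReal.ofReal (r ^ s) * c r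
        = ENNReal.ofReal (2 * (r ^ (s + 1) * Real.exp (-r ^ 2))) := by
      intro r hr
      rw [hc]
      simp only
      rw [← ENNReal.ofReal_mul (Real.rpow_nonneg (le_of_lt hr) s)]
      congr 1
      rw [show r ^ (s + 1) = r ^ s * r from by rw [Real.rpow_add hr, Real.rpow_one]]
      ring
    rw [setLIntegral_congr_fun measurableSet_Ioi h1]
    have hint : IntegrableOn (fun r : ℝ => 2 * (r ^ (s + 1) * Real.exp (-r ^ 2))) (Ioi 0) :=
      (aux_gamma_int (by linarith : (-1:ℝ) < s + 1)).1.const_mul 2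
    rw [← ofReal_integral_eq_lintegral_ofReal hint
      (ae_restrict_of_forall_mem measurableSet_Ioi fun r hr => by
        have hr0 : (0:ℝ) < r := hr
        positivity)]
    rw [integral_const_mul, (aux_gamma_int (by linarith : (-1:ℝ) < s + 1)).2]
    congr 1
    rw [show (s + 1 + 1) / 2 = 1 + s / 2 by ring]
    ring
  have hG2 : ∫⁻ x in P, ENNReal.ofReal (h x)
      = (∫⁻ x in A 1, F x) * ENNReal.ofReal (Real.Gamma (1 + s / 2)) := by
    rw [hswap]
    calc ∫⁻ r in Ioi (0:ℝ), (∫⁻ x in A r, F x) * c r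
        = ∫⁻ r in Ioi (0:ℝ), (∫⁻ x in A 1, F x) * (ENNReal.ofReal (r ^ s) * c r) := by
          apply setLIntegral_congr_fun measurableSet_Ioi (fun r hr => ?_)
          rw [hscale r hr]
          ring
      _ = (∫⁻ x in A 1, F x) * ∫⁻ r in Ioi (0:ℝ), ENNReal.ofReal (r ^ s) * c r :=
          lintegral_const_mul _ (by fun_prop)
      _ = (∫⁻ x in A 1, F x) * ENNReal.ofReal (Real.Gamma (1 + s / 2)) := by rw [hgamma2]
  have key : ENNReal.ofReal (∏ i, ((1 / 2) * Real.Gamma (p i / 2)))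
      = (∫⁻ x in A 1, F x) * ENNReal.ofReal (Real.Gamma (1 + s / 2)) := by
    rw [← hG1, hG2]
  have hgp : 0 < Real.Gamma (1 + s / 2) := Real.Gamma_pos_of_pos (by linarith)
  have hprodnn : 0 ≤ ∏ i, ((1 / 2) * Real.Gamma (p i / 2)) :=
    Finset.prod_nonneg fun i _ =>
      mul_nonneg (by norm_num) (Real.Gamma_pos_of_pos (by linarith [hp i])).le
  have keyR := congrArg ENNReal.toReal key
  rw [ENNReal.toReal_ofReal hprodnn, ENNReal.toReal_mul, ENNReal.toReal_ofReal hgp.le] at keyR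
  have hBA : Bplus = A 1 := by
    rw [hB, hA]
    ext x
    simp only [Set.mem_setOf_eq, Set.mem_inter_iff, one_pow]
    exact ⟨fun hx => ⟨hx.1, hx.2⟩, fun hx => ⟨hx.1, hx.2⟩⟩
  rw [hBA]
  rw [integral_eq_lintegral_of_nonneg_ae
    (ae_restrict_of_forall_mem (hAm 1) fun x hx =>
      Finset.prod_nonneg fun i _ => Real.rpow_nonneg (hx.2 i).le _)
    hfm.aestronglyMeasurable]
  have hIF : (∫⁻ x in A 1, ENNReal.ofReal (f x)) = ∫⁻ x in A 1, F x := rfl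
  rw [hIF, (eq_div_iff hgp.ne').mpr keyR.symm]
  rw [Finset.prod_mul_distrib, Finset.prod_const, Finset.card_univ, Fintype.card_fin,
    one_div_pow]
end

section
/- Fix R > 0 and x ∈ ℝ. Then lim_{n→∞} ( Γ(1 + n/2) / ( √π · Γ((n+1)/2) ) ) · (nR² − x²)^{(n−1)/2} / (nR²)^{n/2} = (1/(R·√(2π)))·exp(−x²/(2R²)), where for each n the expression (nR² − x²)^{(n−1)/2} is understood to be 0 when x² > nR². -/
open Filter Real

lemma gamma_ratio_lb {s : ℝ} (hs : 0 < s) :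
    Real.sqrt s * Real.Gamma (s + 1/2) ≤ Real.Gamma (s + 1) := by
  have hG := Real.Gamma_pos_of_pos hs
  have key : Real.Gamma (s + 1/2) ≤ Real.sqrt s * Real.Gamma s := by
    have h := Real.Gamma_mul_add_mul_le_rpow_Gamma_mul_rpow_Gamma hs
      (by linarith : (0:ℝ) < s + 1) one_half_pos one_half_pos (by norm_num)
    rw [show (1/2:ℝ) * s + (1/2) * (s+1) = s + 1/2 by ring,
      Real.Gamma_add_one hs.ne'] at h
    calc Real.Gamma (s + 1/2) ≤ Real.Gamma s ^ (1/2:ℝ) * (s * Real.Gamma s) ^ (1/2:ℝ) := h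
    _ = Real.sqrt (Real.Gamma s) * (Real.sqrt s * Real.sqrt (Real.Gamma s)) := by
        rw [← Real.sqrt_eq_rpow, ← Real.sqrt_eq_rpow, Real.sqrt_mul hs.le]
    _ = Real.sqrt s * (Real.sqrt (Real.Gamma s) * Real.sqrt (Real.Gamma s)) := by ring
    _ = Real.sqrt s * Real.Gamma s := by rw [Real.mul_self_sqrt hG.le]
  calc Real.sqrt s * Real.Gamma (s + 1/2) ≤ Real.sqrt s * (Real.sqrt s * Real.Gamma s) :=
        mul_le_mul_of_nonneg_left key (Real.sqrt_nonneg s)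
  _ = s * Real.Gamma s := by rw [← mul_assoc, Real.mul_self_sqrt hs.le]
  _ = Real.Gamma (s + 1) := (Real.Gamma_add_one hs.ne').symm

lemma gamma_ratio_ub {s : ℝ} (hs : 0 < s) :
    Real.Gamma (s + 1) ≤ Real.sqrt (s + 1/2) * Real.Gamma (s + 1/2) := by
  have hs2 : (0:ℝ) < s + 1/2 := by linarith
  have hG := Real.Gamma_pos_of_pos hs2
  have h := Real.Gamma_mul_add_mul_le_rpow_Gamma_mul_rpow_Gamma hs2
    (by linarith : (0:ℝ) < s + 3/2) one_half_pos one_half_pos (by norm_num)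
  rw [show (1/2:ℝ) * (s+1/2) + (1/2) * (s+3/2) = s + 1 by ring,
    show s + 3/2 = (s + 1/2) + 1 by ring, Real.Gamma_add_one hs2.ne'] at h
  calc Real.Gamma (s + 1)
      ≤ Real.Gamma (s+1/2) ^ (1/2:ℝ) * ((s+1/2) * Real.Gamma (s+1/2)) ^ (1/2:ℝ) := h
  _ = Real.sqrt (Real.Gamma (s+1/2)) * (Real.sqrt (s+1/2) * Real.sqrt (Real.Gamma (s+1/2))) := by
      rw [← Real.sqrt_eq_rpow, ← Real.sqrt_eq_rpow, Real.sqrt_mul hs2.le]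
  _ = Real.sqrt (s+1/2) * (Real.sqrt (Real.Gamma (s+1/2)) * Real.sqrt (Real.Gamma (s+1/2))) := by
      ring
  _ = Real.sqrt (s+1/2) * Real.Gamma (s+1/2) := by rw [Real.mul_self_sqrt hG.le]

lemma gamma_ratio_tendsto :
    Tendsto (fun n : ℕ => Real.Gamma ((n:ℝ)/2 + 1) / Real.Gamma ((n:ℝ)/2 + 1/2) / Real.sqrt n)
      atTop (nhds (Real.sqrt (1/2))) := by
  have hup : Tendsto (fun n : ℕ => Real.sqrt (1/2 + 1/(2*(n:ℝ)))) atTop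
      (nhds (Real.sqrt (1/2))) := by
    have h0 : Tendsto (fun n : ℕ => 1/2 + 1/(2*(n:ℝ))) atTop (nhds (1/2 + 0)) := by
      refine tendsto_const_nhds.add ?_
      have h2 : Tendsto (fun n : ℕ => (1:ℝ)/(2*n)) atTop (nhds 0) := by
        have := tendsto_one_div_atTop_nhds_zero_nat.const_mul (1/2 : ℝ)
        simpa [div_eq_mul_inv, mul_inv, mul_comm, mul_assoc, mul_left_comm] using this
      exact h2
    rw [add_zero] at h0
    exact (Real.continuous_sqrt.tendsto _).comp h0
  refine tendsto_of_tendsto_of_tendsto_of_le_of_le' tendsto_const_nhds hup ?_ ?_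
  · filter_upwards [eventually_ge_atTop 1] with n hn
    have hn' : (0:ℝ) < n := by exact_mod_cast hn
    have hs : (0:ℝ) < (n:ℝ)/2 := by positivity
    have hb := gamma_ratio_lb hs
    have hGpos : 0 < Real.Gamma ((n:ℝ)/2 + 1/2) := Real.Gamma_pos_of_pos (by positivity)
    have h1 : Real.sqrt ((n:ℝ)/2) ≤ Real.Gamma ((n:ℝ)/2 + 1) / Real.Gamma ((n:ℝ)/2 + 1/2) :=
      (le_div_iff₀ hGpos).mpr hb
    have h2 : Real.sqrt ((n:ℝ)/2) / Real.sqrt n = Real.sqrt (1/2) := by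
      rw [← Real.sqrt_div (by positivity)]
      congr 1
      field_simp
    calc Real.sqrt (1/2) = Real.sqrt ((n:ℝ)/2) / Real.sqrt n := h2.symm
    _ ≤ _ := by gcongr
  · filter_upwards [eventually_ge_atTop 1] with n hn
    have hn' : (0:ℝ) < n := by exact_mod_cast hn
    have hs : (0:ℝ) < (n:ℝ)/2 := by positivity
    have hb := gamma_ratio_ub hs
    have hGpos : 0 < Real.Gamma ((n:ℝ)/2 + 1/2) := Real.Gamma_pos_of_pos (by positivity)
    have h1 : Real.Gamma ((n:ℝ)/2 + 1) / Real.Gamma ((n:ℝ)/2 + 1/2)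
        ≤ Real.sqrt ((n:ℝ)/2 + 1/2) := (div_le_iff₀ hGpos).mpr (by linarith [hb])
    have h2 : Real.sqrt ((n:ℝ)/2 + 1/2) / Real.sqrt n = Real.sqrt (1/2 + 1/(2*(n:ℝ))) := by
      rw [← Real.sqrt_div (by positivity)]
      congr 1
      field_simp
    calc Real.Gamma ((n:ℝ)/2 + 1) / Real.Gamma ((n:ℝ)/2 + 1/2) / Real.sqrt n
        ≤ Real.sqrt ((n:ℝ)/2 + 1/2) / Real.sqrt n := by gcongr
    _ = _ := h2

lemma pow_factor_tendsto (a : ℝ) (ha : a ≤ 0) :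
    Tendsto (fun n : ℕ => (1 + a/(n:ℝ)) ^ (((n:ℝ)-1)/2)) atTop (nhds (Real.exp (a/2))) := by
  have key : Tendsto (fun n : ℕ => (((n:ℝ)-1)/2) * Real.log (1 + a/(n:ℝ))) atTop (nhds (a/2)) := by
    have h2 : Tendsto (fun n : ℕ => (n:ℝ) * Real.log (1 + a/(n:ℝ))) atTop (nhds a) :=
      (tendsto_mul_log_one_add_div_atTop a).comp tendsto_natCast_atTop_atTop
    have h1 : Tendsto (fun n : ℕ => 1 - 1/(n:ℝ)) atTop (nhds 1) := by
      simpa using (tendsto_const_nhds (x := (1:ℝ))).sub tendsto_one_div_atTop_nhds_zero_nat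
    have := (h1.mul h2).div_const 2
    rw [one_mul] at this
    refine this.congr' ?_
    filter_upwards [eventually_ge_atTop 1] with n hn
    have hn' : (n:ℝ) ≠ 0 := by positivity
    field_simp
  have hpos : ∀ᶠ n : ℕ in atTop, (0:ℝ) < 1 + a/(n:ℝ) := by
    filter_upwards [eventually_gt_atTop (⌈-a⌉₊)] with n hn
    have h1 : -a < (n:ℝ) := lt_of_le_of_lt (Nat.le_ceil _) (by exact_mod_cast hn)
    have hn' : (0:ℝ) < n := lt_of_le_of_lt (neg_nonneg.mpr ha) h1
    have h3 : -a / n < 1 := (div_lt_one hn').mpr h1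
    have h4 : -(a/n) < 1 := by rwa [neg_div] at h3
    linarith
  refine ((Real.continuous_exp.tendsto _).comp key).congr' ?_
  filter_upwards [hpos] with n hn
  rw [Real.rpow_def_of_pos hn, Function.comp_apply, mul_comm]

/-- formulas (8.37)–(8.38): the marginal density at `x` of one coordinate
of a uniform point on the ball of radius `√n R` in `ℝⁿ` converges pointwise to the
Gaussian density `(1/(R√(2π))) exp(-x²/(2R²))`; the power `(nR² - x²)^{(n-1)/2}` is
understood to be `0` when `x² > nR²`. -/
theorem stmt16 (R : ℝ) (hR : 0 < R) (x : ℝ) :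
    Tendsto
      (fun n : ℕ =>
        if x ^ 2 ≤ n * R ^ 2 then
          (Real.Gamma (1 + (n : ℝ) / 2) / (Real.sqrt π * Real.Gamma (((n : ℝ) + 1) / 2))) *
            ((n * R ^ 2 - x ^ 2) ^ (((n : ℝ) - 1) / 2)) / ((n * R ^ 2 : ℝ) ^ ((n : ℝ) / 2))
        else 0)
      atTop
      (nhds (1 / (R * Real.sqrt (2 * π)) * Real.exp (-x ^ 2 / (2 * R ^ 2)))) := by
  set a : ℝ := -x ^ 2 / R ^ 2 with ha_def
  have ha : a ≤ 0 := by
    rw [ha_def, neg_div]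
    exact neg_nonpos.mpr (by positivity)
  have hcomb := (gamma_ratio_tendsto.mul (tendsto_const_nhds (x := 1/(Real.sqrt π * R)))).mul
    (pow_factor_tendsto a ha)
  have hval : Real.sqrt (1/2) * (1/(Real.sqrt π * R)) * Real.exp (a/2)
      = 1 / (R * Real.sqrt (2 * π)) * Real.exp (-x ^ 2 / (2 * R ^ 2)) := by
    have h1 : Real.exp (a/2) = Real.exp (-x ^ 2 / (2 * R ^ 2)) := by
      congr 1
      rw [ha_def]
      ring
    have h2 : Real.sqrt (2 * π) = Real.sqrt 2 * Real.sqrt π := Real.sqrt_mul (by norm_num) π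
    have h3 : Real.sqrt (1/2) = (Real.sqrt 2)⁻¹ := by
      rw [one_div, Real.sqrt_inv]
    rw [h1, h2, h3]
    ring
  rw [← hval]
  refine hcomb.congr' ?_
  have hx : ∀ᶠ n : ℕ in atTop, x ^ 2 < (n:ℝ) * R ^ 2 := by
    filter_upwards [eventually_gt_atTop (⌈x ^ 2 / R ^ 2⌉₊)] with n hn
    have h1 : x ^ 2 / R ^ 2 < (n:ℝ) := lt_of_le_of_lt (Nat.le_ceil _) (by exact_mod_cast hn)
    calc x ^ 2 = x ^ 2 / R ^ 2 * R ^ 2 := by field_simp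
    _ < (n:ℝ) * R ^ 2 := by
        exact mul_lt_mul_of_pos_right h1 (by positivity)
  filter_upwards [hx, eventually_ge_atTop 1] with n hxn hn1
  have hn0 : (0:ℝ) < n := by exact_mod_cast hn1
  have hRn : (0:ℝ) < (n:ℝ) * R ^ 2 := by positivity
  have hbase : (0:ℝ) < 1 + a / n := by
    have : (n:ℝ) * R ^ 2 * (1 + a / n) = (n:ℝ) * R ^ 2 - x ^ 2 := by
      rw [ha_def]; field_simp; ring
    nlinarith [hxn]
  have hfac : ((n:ℝ) * R ^ 2 - x ^ 2) = ((n:ℝ) * R ^ 2) * (1 + a / n) := by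
    rw [ha_def]; field_simp; ring
  have hsplit : ((n:ℝ) * R ^ 2 - x ^ 2) ^ (((n:ℝ) - 1)/2)
      = ((n:ℝ) * R ^ 2) ^ (((n:ℝ) - 1)/2) * (1 + a / n) ^ (((n:ℝ) - 1)/2) := by
    rw [hfac, Real.mul_rpow hRn.le hbase.le]
  have hquot : ((n:ℝ) * R ^ 2) ^ (((n:ℝ) - 1)/2) / ((n:ℝ) * R ^ 2) ^ ((n:ℝ)/2)
      = (Real.sqrt n * R)⁻¹ := by
    rw [← Real.rpow_sub hRn, show ((n:ℝ) - 1)/2 - (n:ℝ)/2 = -(1/2) by ring,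
      Real.rpow_neg hRn.le, ← Real.sqrt_eq_rpow, Real.sqrt_mul (Nat.cast_nonneg n),
      Real.sqrt_sq hR.le]
  have hG1 : Real.Gamma (1 + (n:ℝ)/2) = Real.Gamma ((n:ℝ)/2 + 1) := by rw [add_comm]
  have hG2 : Real.Gamma (((n:ℝ) + 1)/2) = Real.Gamma ((n:ℝ)/2 + 1/2) := by
    congr 1; ring
  have hGpos : 0 < Real.Gamma ((n:ℝ)/2 + 1/2) := Real.Gamma_pos_of_pos (by positivity)
  have hsn : (0:ℝ) < Real.sqrt n := Real.sqrt_pos.mpr hn0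
  have hsπ : (0:ℝ) < Real.sqrt π := Real.sqrt_pos.mpr pi_pos
  rw [if_pos hxn.le, hG1, hG2, hsplit]
  rw [show Real.Gamma ((n:ℝ)/2 + 1) / (Real.sqrt π * Real.Gamma ((n:ℝ)/2 + 1/2)) *
      (((n:ℝ) * R ^ 2) ^ (((n:ℝ) - 1)/2) * (1 + a / n) ^ (((n:ℝ) - 1)/2)) /
      ((n:ℝ) * R ^ 2) ^ ((n:ℝ)/2)
    = Real.Gamma ((n:ℝ)/2 + 1) / (Real.sqrt π * Real.Gamma ((n:ℝ)/2 + 1/2)) *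
      (1 + a / n) ^ (((n:ℝ) - 1)/2) *
      (((n:ℝ) * R ^ 2) ^ (((n:ℝ) - 1)/2) / ((n:ℝ) * R ^ 2) ^ ((n:ℝ)/2)) by ring, hquot]
  ring
end

section
/- Let (a_k)_{k≥0} be a sequence of real numbers with a₀ = 1 satisfying, for every integer k ≥ 0, the relation 2^k·a_k = ∑_{i=0}^k a_i·a_{k−i}. Then a_k = a₁^k / k! for all k ≥ 0. -/
lemma stmt17_aux (c : ℝ) (k : ℕ) :
    ∑ i ∈ Finset.range (k + 1),
        c ^ i / (Nat.factorial i : ℝ) * (c ^ (k - i) / (Nat.factorial (k - i) : ℝ))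
      = c ^ k * 2 ^ k / (Nat.factorial k : ℝ) := by
  have hterm : ∀ i ∈ Finset.range (k + 1),
      c ^ i / (Nat.factorial i : ℝ) * (c ^ (k - i) / (Nat.factorial (k - i) : ℝ))
        = c ^ k * (k.choose i : ℝ) / (Nat.factorial k : ℝ) := by
    intro i hi
    rw [Finset.mem_range, Nat.lt_succ_iff] at hi
    have h1 : c ^ i * c ^ (k - i) = c ^ k := by
      rw [← pow_add, Nat.add_sub_cancel' hi]
    have h2 : ((k.choose i : ℝ)) * (Nat.factorial i : ℝ) * (Nat.factorial (k - i) : ℝ)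
        = (Nat.factorial k : ℝ) := by
      exact_mod_cast congrArg (Nat.cast (R := ℝ)) (Nat.choose_mul_factorial_mul_factorial hi)
    have hi0 : (Nat.factorial i : ℝ) ≠ 0 := Nat.cast_ne_zero.2 (Nat.factorial_ne_zero i)
    have hk0 : (Nat.factorial (k - i) : ℝ) ≠ 0 := Nat.cast_ne_zero.2 (Nat.factorial_ne_zero _)
    have hkk0 : (Nat.factorial k : ℝ) ≠ 0 := Nat.cast_ne_zero.2 (Nat.factorial_ne_zero k)
    field_simp
    rw [← h1, ← h2]
    ring
  rw [Finset.sum_congr rfl hterm]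
  have hsum : ∑ i ∈ Finset.range (k + 1), (k.choose i : ℝ) = 2 ^ k := by
    exact_mod_cast congrArg (Nat.cast (R := ℝ)) (Nat.sum_range_choose k)
  rw [← Finset.sum_div, ← Finset.mul_sum, hsum]

/-- Section 9.1: if `a₀ = 1` and `2ᵏ a_k = ∑_{i=0}^k a_i a_{k-i}` for all
`k ≥ 0`, then `a_k = a₁ᵏ / k!`. -/
theorem stmt17 (a : ℕ → ℝ) (h0 : a 0 = 1)
    (hrec : ∀ k : ℕ, (2 : ℝ) ^ k * a k = ∑ i ∈ Finset.range (k + 1), a i * a (k - i)) :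
    ∀ k : ℕ, a k = a 1 ^ k / (Nat.factorial k : ℝ) := by
  intro k
  induction k using Nat.strong_induction_on with
  | _ k IH =>
    match k, IH with
    | 0, _ => simpa using h0
    | 1, _ => simp
    | (n + 2), IH =>
      set c := a 1 with hc
      have key := hrec (n + 2)
      rw [Finset.sum_range_succ, Finset.sum_range_succ'] at key
      -- rewrite inner sum using IH
      have hmid : ∀ i ∈ Finset.range (n + 1),
          a (i + 1) * a (n + 2 - (i + 1))
            = c ^ (i + 1) / (Nat.factorial (i + 1) : ℝ)
              * (c ^ (n + 2 - (i + 1)) / (Nat.factorial (n + 2 - (i + 1)) : ℝ)) := by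
        intro i hi
        rw [Finset.mem_range] at hi
        rw [IH (i + 1) (by omega), IH (n + 2 - (i + 1)) (by omega)]
      rw [Finset.sum_congr rfl hmid] at key
      have haux := stmt17_aux c (n + 2)
      rw [Finset.sum_range_succ, Finset.sum_range_succ'] at haux
      simp only [Nat.sub_self, Nat.sub_zero, Nat.factorial_zero, pow_zero, Nat.cast_one] at key haux
      rw [h0] at key
      have hne : (2 : ℝ) ^ (n + 2) - 2 ≠ 0 := by
        have : (4 : ℝ) ≤ 2 ^ (n + 2) := by
          calc (4 : ℝ) = 2 ^ 2 := by norm_num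
          _ ≤ 2 ^ (n + 2) := by
            apply pow_le_pow_right₀ (by norm_num); omega
        linarith
      have hgoal : ((2 : ℝ) ^ (n + 2) - 2) * a (n + 2)
          = ((2 : ℝ) ^ (n + 2) - 2) * (c ^ (n + 2) / (Nat.factorial (n + 2) : ℝ)) := by
        linear_combination key + haux
      exact mul_left_cancel₀ hne hgoal
end
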